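/- arXiv:2501.18518 — 6 statements merged into one kernel-verified Lean document; each statement's English description precedes it below -/
import Mathlib

section
/- Reynolds Transport Theorem in ℝⁿ: Let χ : [0,T] × ℝⁿ → ℝⁿ be smooth with χ(0,·) = id, each map χᵗ = χ(t,·) a diffeomorphism of ℝⁿ, and velocity field v defined by v(t, χ(t,y)) = ∂χ/∂t(t,y). Let V(0) ⊆ ℝⁿ be a bounded open set, V(t) = χᵗ(V(0)), and let ψ : [0,T] × ℝⁿ → ℝ be continuously differentiable. Then t ↦ ∫_{V(t)} ψ(t,x) dx is differentiable and d/dt ∫_{V(t)} ψ(t,x) dx = ∫_{V(t)} [∂ψ/∂t + div_x(ψ v)](t,x) dx. -/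
open MeasureTheory ContDiff

noncomputable section

lemma hasDerivAt_det_one {n : ℕ} {M : ℝ → Matrix (Fin n) (Fin n) ℝ}
    {M' : Matrix (Fin n) (Fin n) ℝ} {t : ℝ}
    (h : ∀ i j, HasDerivAt (fun s => M s i j) (M' i j) t) (h1 : M t = 1) :
    HasDerivAt (fun s => (M s).det) M'.trace t := by
  have key : ∀ σ : Equiv.Perm (Fin n),
      HasDerivAt (fun s => ((Equiv.Perm.sign σ : ℤ) : ℝ) • ∏ i, M s (σ i) i)
        (((Equiv.Perm.sign σ : ℤ) : ℝ) • ∑ i : Fin n,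
          (∏ j ∈ Finset.univ.erase i, M t (σ j) j) • M' (σ i) i) t := by
    intro σ
    exact (HasDerivAt.fun_finsetProd (fun i _ => h (σ i) i)).const_smul (((Equiv.Perm.sign σ : ℤ) : ℝ))
  have sum := HasDerivAt.fun_sum (u := Finset.univ) (fun σ _ => key σ)
  have e1 : (fun s => (M s).det) = fun s => ∑ σ : Equiv.Perm (Fin n),
      ((Equiv.Perm.sign σ : ℤ) : ℝ) • ∏ i, M s (σ i) i := by
    funext s; rw [Matrix.det_apply]
    congr 1; funext σ
    simp [Units.smul_def, zsmul_eq_mul, smul_eq_mul]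
  rw [e1]
  convert sum using 1
  · rfl
  · rfl
  rw [Finset.sum_eq_single (1 : Equiv.Perm (Fin n))]
  · simp only [Equiv.Perm.sign_one, Units.val_one, Int.cast_one, one_smul, Equiv.Perm.one_apply]
    rw [Matrix.trace]
    congr 1; funext i
    rw [Finset.prod_eq_one, one_smul]
    · rfl
    intro j hj
    simp [h1, Matrix.one_apply]
  · intro σ _ hσ
    rw [Finset.sum_eq_zero, smul_zero]
    intro i _
    obtain ⟨k, hk⟩ : ∃ k, σ k ≠ k := by
      by_contra hc
      push_neg at hc
      exact hσ (Equiv.ext fun x => hc x)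
    by_cases hik : i = k
    · subst hik
      have hk2 : σ⁻¹ i ≠ i := fun hc => hk (by conv_lhs => rw [← hc]; simp)
      have hmem : σ⁻¹ i ∈ Finset.univ.erase i := by simpa using hk2
      rw [Finset.prod_eq_zero hmem, zero_smul]
      have : σ (σ⁻¹ i) = i := by simp
      rw [this, h1, Matrix.one_apply_ne (Ne.symm hk2)]
    · have hmem : k ∈ Finset.univ.erase i := by simp [Ne.symm hik]
      rw [Finset.prod_eq_zero hmem, zero_smul]
      rw [h1, Matrix.one_apply_ne hk]
  · simp

lemma hasDerivAt_det_adjugate {n : ℕ} {M : ℝ → Matrix (Fin n) (Fin n) ℝ}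
    {M' : Matrix (Fin n) (Fin n) ℝ} {t : ℝ}
    (h : ∀ i j, HasDerivAt (fun s => M s i j) (M' i j) t) (hdet : (M t).det ≠ 0) :
    HasDerivAt (fun s => (M s).det) (((M t).adjugate * M').trace) t := by
  set N : ℝ → Matrix (Fin n) (Fin n) ℝ := fun s => (M t)⁻¹ * M s with hN
  have hN' : ∀ i j, HasDerivAt (fun s => N s i j) (((M t)⁻¹ * M') i j) t := by
    intro i j
    simp only [hN, Matrix.mul_apply]
    exact HasDerivAt.fun_sum (fun k _ => (h k j).const_mul _)
  have hN1 : N t = 1 := Matrix.nonsing_inv_mul _ (isUnit_iff_ne_zero.mpr hdet)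
  have hD := (hasDerivAt_det_one hN' hN1).const_mul (M t).det
  have e1 : (fun s => (M t).det * (N s).det) = fun s => (M s).det := by
    funext s
    rw [hN, Matrix.det_mul, Matrix.det_nonsing_inv, Ring.inverse_eq_inv']
    field_simp
  rw [e1] at hD
  convert hD using 1
  · rfl
  · rfl
  have hadj : (M t).adjugate = (M t).det • (M t)⁻¹ := by
    rw [Matrix.inv_def, Ring.inverse_eq_inv', smul_smul, mul_inv_cancel₀ hdet, one_smul]
  rw [hadj, Matrix.smul_mul, Matrix.trace_smul, smul_eq_mul]

lemma pos_of_continuous_ne_zero {f : ℝ → ℝ} (hc : Continuous f) (h0 : f 0 = 1)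
    (hne : ∀ s, f s ≠ 0) : ∀ t, 0 < f t := by
  intro t
  by_contra h
  push_neg at h
  have hlt : f t < 0 := lt_of_le_of_ne h (hne t)
  rcases le_or_gt 0 t with h0t | ht0
  · have := intermediate_value_Icc' h0t hc.continuousOn (a := 0) (b := t)
    have h0mem : (0:ℝ) ∈ Set.Icc (f t) (f 0) := by
      constructor <;> simp [h0, hlt.le]
    obtain ⟨s, _, hs⟩ := this h0mem
    exact hne s hs
  · have := intermediate_value_Icc ht0.le hc.continuousOn (a := t) (b := 0)
    have h0mem : (0:ℝ) ∈ Set.Icc (f t) (f 0) := by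
      constructor <;> simp [h0, hlt.le]
    obtain ⟨s, _, hs⟩ := this h0mem
    exact hne s hs

set_option maxHeartbeats 2000000 in
/-- **Reynolds Transport Theorem in ℝⁿ.** -/
theorem reynolds_transport
    (n : ℕ) (T : ℝ) (hT : 0 < T)
    (χ : ℝ → (Fin n → ℝ) → (Fin n → ℝ))
    (χinv : ℝ → (Fin n → ℝ) → (Fin n → ℝ))
    (hχ : ContDiff ℝ ∞ (fun p : ℝ × (Fin n → ℝ) => χ p.1 p.2))
    (hχ0 : χ 0 = id)
    (hleft : ∀ t, Function.LeftInverse (χinv t) (χ t))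
    (hright : ∀ t, Function.RightInverse (χinv t) (χ t))
    (hχinv : ∀ t, ContDiff ℝ ∞ (χinv t))
    (v : ℝ → (Fin n → ℝ) → (Fin n → ℝ))
    (hv : ∀ t y, HasDerivAt (fun s => χ s y) (v t (χ t y)) t)
    (V0 : Set (Fin n → ℝ)) (hV0open : IsOpen V0) (hV0bdd : Bornology.IsBounded V0)
    (ψ : ℝ → (Fin n → ℝ) → ℝ)
    (hψ : ContDiff ℝ 1 (fun p : ℝ × (Fin n → ℝ) => ψ p.1 p.2)) :
    ∀ t ∈ Set.Icc 0 T,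
      HasDerivAt (fun s => ∫ x in χ s '' V0, ψ s x)
        (∫ x in χ t '' V0,
          (deriv (fun s => ψ s x) t +
            ∑ i, fderiv ℝ (fun y => ψ t y * v t y i) x (Pi.single i 1))) t := by
  classical
  intro t _ht
  -- ## Setup: derivatives of the flow
  have hΦdiff : Differentiable ℝ (fun p : ℝ × (Fin n → ℝ) => χ p.1 p.2) :=
    hχ.differentiable (by norm_num)
  set D := fderiv ℝ (fun p : ℝ × (Fin n → ℝ) => χ p.1 p.2) with hDdef
  have hΦfd : ∀ p : ℝ × (Fin n → ℝ),
      HasFDerivAt (fun p : ℝ × (Fin n → ℝ) => χ p.1 p.2) (D p) p :=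
    fun p => (hΦdiff p).hasFDerivAt
  have hDsmooth : ContDiff ℝ ∞ D := hχ.fderiv_right (by norm_num)
  have hDdiff : Differentiable ℝ D := hDsmooth.differentiable (by norm_num)
  have hD2cont : Continuous (fderiv ℝ D) := hDsmooth.continuous_fderiv (by norm_num)
  have hDcont : Continuous D := hDsmooth.continuous
  have hχs : ∀ s, ContDiff ℝ ∞ (χ s) := fun s => hχ.comp (contDiff_const.prodMk contDiff_id)
  have hχsdiff : ∀ s, Differentiable ℝ (χ s) := fun s => (hχs s).differentiable (by norm_num)
  set J : ℝ → (Fin n → ℝ) → (Fin n → ℝ) →L[ℝ] (Fin n → ℝ) :=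
    fun s y => fderiv ℝ (χ s) y with hJdef
  have hJfd : ∀ s y, HasFDerivAt (χ s) (J s y) y := fun s y => ((hχsdiff s) y).hasFDerivAt
  have hJeq : ∀ s y, J s y = (D (s, y)).comp (ContinuousLinearMap.inr ℝ ℝ (Fin n → ℝ)) := by
    intro s y
    have h1 : HasFDerivAt (fun z => χ s z)
        ((D (s, y)).comp (ContinuousLinearMap.inr ℝ ℝ (Fin n → ℝ))) y :=
      (hΦfd (s, y)).comp y (hasFDerivAt_prodMk_right s y)
    exact (hJfd s y).unique h1
  have hcurve : ∀ s y, HasDerivAt (fun s' => χ s' y) (D (s, y) (1, 0)) s := by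
    intro s y
    have h := (hΦfd (s, y)).comp_hasDerivAt s ((hasDerivAt_id s).prodMk (hasDerivAt_const s y))
    exact h
  have hweq : ∀ s y, v s (χ s y) = D (s, y) (1, 0) := fun s y => (hv s y).unique (hcurve s y)
  -- time derivative of the space derivative, via symmetry of second derivatives
  set Kc : ℝ → (Fin n → ℝ) → (Fin n → ℝ) →L[ℝ] (Fin n → ℝ) := fun s y =>
    (ContinuousLinearMap.apply ℝ (Fin n → ℝ) ((1:ℝ), (0 : Fin n → ℝ))).comp
      ((fderiv ℝ D (s, y)).comp (ContinuousLinearMap.inr ℝ ℝ (Fin n → ℝ))) with hKcdef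
  have hKccont : Continuous fun p : ℝ × (Fin n → ℝ) => Kc p.1 p.2 := by
    apply Continuous.clm_comp continuous_const
    exact (hD2cont.comp continuous_id).clm_comp continuous_const
  have hJderiv : ∀ s y, HasDerivAt (fun s' => J s' y) (Kc s y) s := by
    intro s y
    have hc : HasDerivAt (fun s' => D (s', y)) (fderiv ℝ D (s, y) (1, 0)) s := by
      have := (hDdiff (s, y)).hasFDerivAt.comp_hasDerivAt s
        ((hasDerivAt_id s).prodMk (hasDerivAt_const s y))
      exact this
    set R : ((ℝ × (Fin n → ℝ)) →L[ℝ] (Fin n → ℝ)) →L[ℝ]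
        ((Fin n → ℝ) →L[ℝ] (Fin n → ℝ)) :=
      (ContinuousLinearMap.compL ℝ (Fin n → ℝ) (ℝ × (Fin n → ℝ)) (Fin n → ℝ)).flip
        (ContinuousLinearMap.inr ℝ ℝ (Fin n → ℝ)) with hRdef
    have hR : ∀ B : (ℝ × (Fin n → ℝ)) →L[ℝ] (Fin n → ℝ),
        R B = B.comp (ContinuousLinearMap.inr ℝ ℝ (Fin n → ℝ)) := fun B => rfl
    have h2 : HasDerivAt (fun s' => R (D (s', y))) (R (fderiv ℝ D (s, y) (1, 0))) s :=
      R.hasFDerivAt.comp_hasDerivAt s hc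
    have e1 : (fun s' => R (D (s', y))) = fun s' => J s' y := by
      funext s'; rw [hR, hJeq]
    rw [e1] at h2
    convert h2 using 1
    refine ContinuousLinearMap.ext fun z => ?_
    have hsymm := second_derivative_symmetric (f := fun p : ℝ × (Fin n → ℝ) => χ p.1 p.2)
      (f' := D) (f'' := fderiv ℝ D (s, y)) hΦfd ((hDdiff (s, y)).hasFDerivAt) (0, z) (1, 0)
    simp only [hKcdef, hR, ContinuousLinearMap.comp_apply, ContinuousLinearMap.inr_apply,
      ContinuousLinearMap.apply_apply]
    exact hsymm
  -- smoothness of the velocity field in space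
  have hvsmooth : ∀ s, ContDiff ℝ ∞ (v s) := by
    intro s
    have e : v s = fun x => D (s, χinv s x) (1, 0) := by
      funext x
      conv_lhs => rw [← hright s x]
      rw [hweq]
    rw [e]
    exact (hDsmooth.comp (contDiff_const.prodMk (hχinv s))).clm_apply contDiff_const
  have hvdiff : ∀ s x, DifferentiableAt ℝ (v s) x :=
    fun s x => ((hvsmooth s).differentiable (by norm_num)) x
  have hKceq : ∀ s y, Kc s y = (fderiv ℝ (v s) (χ s y)).comp (J s y) := by
    intro s y
    have e : (fun z => v s (χ s z)) = fun z => D (s, z) (1, 0) := by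
      funext z; rw [hweq]
    have h1' : HasFDerivAt (fun z => v s (χ s z))
        ((fderiv ℝ (v s) (χ s y)).comp (J s y)) y :=
      ((hvdiff s (χ s y)).hasFDerivAt).comp y (hJfd s y)
    have h2' : HasFDerivAt (fun z => D (s, z) (1, 0)) (Kc s y) y := by
      have hD' : HasFDerivAt (fun z => D (s, z))
          ((fderiv ℝ D (s, y)).comp (ContinuousLinearMap.inr ℝ ℝ (Fin n → ℝ))) y :=
        ((hDdiff (s, y)).hasFDerivAt).comp y (hasFDerivAt_prodMk_right s y)
      exact (ContinuousLinearMap.apply ℝ (Fin n → ℝ)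
        ((1:ℝ), (0 : Fin n → ℝ))).hasFDerivAt.comp y hD'
    rw [e] at h1'
    exact h2'.unique h1'
  -- ## Matrices
  set A : ℝ → (Fin n → ℝ) → Matrix (Fin n) (Fin n) ℝ := fun s y =>
    LinearMap.toMatrix' (J s y : (Fin n → ℝ) →ₗ[ℝ] (Fin n → ℝ)) with hAdef
  set Km : ℝ → (Fin n → ℝ) → Matrix (Fin n) (Fin n) ℝ := fun s y =>
    LinearMap.toMatrix' (Kc s y : (Fin n → ℝ) →ₗ[ℝ] (Fin n → ℝ)) with hKmdef
  set ρ : ℝ → (Fin n → ℝ) → ℝ := fun s y => (A s y).det with hρdef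
  have hsingle : ∀ j : Fin n, (fun j' => if j' = j then (1:ℝ) else 0) = Pi.single j 1 := by
    intro j; funext j'; simp [Pi.single_apply]
  have hAentry : ∀ s y i j, A s y i j = J s y (Pi.single j 1) i := by
    intro s y i j
    rw [hAdef]
    simp only [LinearMap.toMatrix'_apply, ContinuousLinearMap.coe_coe]
  have hKmentry : ∀ s y i j, Km s y i j = Kc s y (Pi.single j 1) i := by
    intro s y i j
    rw [hKmdef]
    simp only [LinearMap.toMatrix'_apply, ContinuousLinearMap.coe_coe]
  have hAderiv : ∀ s y i j, HasDerivAt (fun s' => A s' y i j) (Km s y i j) s := by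
    intro s y i j
    have h2 : HasDerivAt (fun s' => J s' y (Pi.single j 1)) (Kc s y (Pi.single j 1)) s := by
      have := ((ContinuousLinearMap.apply ℝ (Fin n → ℝ)
        (Pi.single j (1:ℝ))).hasFDerivAt).comp_hasDerivAt s (hJderiv s y)
      exact this
    have h3 := (hasDerivAt_pi.1 h2) i
    simp only [hAentry, hKmentry]
    exact h3
  -- invertibility
  have hdet_ne : ∀ s y, ρ s y ≠ 0 := by
    intro s y
    have hid : (fun z => χinv s (χ s z)) = (id : (Fin n → ℝ) → (Fin n → ℝ)) :=
      funext (hleft s)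
    have hinvdiff : DifferentiableAt ℝ (χinv s) (χ s y) :=
      ((hχinv s).differentiable (by norm_num)) _
    have hcomp : HasFDerivAt (fun z => χinv s (χ s z))
        ((fderiv ℝ (χinv s) (χ s y)).comp (J s y)) y :=
      hinvdiff.hasFDerivAt.comp y (hJfd s y)
    rw [hid] at hcomp
    have hid' : (fderiv ℝ (χinv s) (χ s y)).comp (J s y) =
        ContinuousLinearMap.id ℝ (Fin n → ℝ) :=
      hcomp.unique (hasFDerivAt_id y)
    have hBA : LinearMap.toMatrix'
        ((fderiv ℝ (χinv s) (χ s y) : (Fin n → ℝ) →ₗ[ℝ] (Fin n → ℝ))) * A s y = 1 := by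
      rw [hAdef, ← LinearMap.toMatrix'_comp, ← ContinuousLinearMap.toLinearMap_comp, hid',
        ContinuousLinearMap.coe_id, LinearMap.toMatrix'_id]
    have hU := (Matrix.isUnit_iff_isUnit_det _).2 (Matrix.isUnit_det_of_left_inverse hBA)
    exact ((Matrix.isUnit_iff_isUnit_det _).1 hU).ne_zero
  -- joint continuity
  have hJcont : Continuous fun p : ℝ × (Fin n → ℝ) => J p.1 p.2 := by
    have e : (fun p : ℝ × (Fin n → ℝ) => J p.1 p.2)
        = fun p => (D p).comp (ContinuousLinearMap.inr ℝ ℝ (Fin n → ℝ)) := by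
      funext p; exact hJeq p.1 p.2
    rw [e]; exact hDcont.clm_comp continuous_const
  have hAcont : Continuous fun p : ℝ × (Fin n → ℝ) => A p.1 p.2 := by
    apply continuous_matrix; intro i j
    simp only [hAentry]
    exact (continuous_apply i).comp (hJcont.clm_apply continuous_const)
  have hKmcont : Continuous fun p : ℝ × (Fin n → ℝ) => Km p.1 p.2 := by
    apply continuous_matrix; intro i j
    simp only [hKmentry]
    exact (continuous_apply i).comp (hKccont.clm_apply continuous_const)
  have hρcont : Continuous fun p : ℝ × (Fin n → ℝ) => ρ p.1 p.2 := hAcont.matrix_det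
  have hρpos : ∀ s y, 0 < ρ s y := by
    intro s y
    have hcont : Continuous fun s' => ρ s' y :=
      hρcont.comp (continuous_id.prodMk continuous_const)
    have h0 : ρ 0 y = 1 := by
      have hJ0 : J 0 y = ContinuousLinearMap.id ℝ (Fin n → ℝ) := by
        rw [hJdef]
        simp only [hχ0]
        exact fderiv_id
      simp only [hρdef, hAdef]
      rw [hJ0, ContinuousLinearMap.coe_id, LinearMap.toMatrix'_id, Matrix.det_one]
    exact pos_of_continuous_ne_zero hcont h0 (fun s' => hdet_ne s' y) s
  have hρderiv : ∀ s y, HasDerivAt (fun s' => ρ s' y) (((A s y).adjugate * Km s y).trace) s :=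
    fun s y => hasDerivAt_det_adjugate (fun i j => hAderiv s y i j) (hdet_ne s y)
  -- ## the ψ part
  set P := fderiv ℝ (fun p : ℝ × (Fin n → ℝ) => ψ p.1 p.2) with hPdef
  have hψdiff : Differentiable ℝ (fun p : ℝ × (Fin n → ℝ) => ψ p.1 p.2) :=
    hψ.differentiable one_ne_zero
  have hPcont : Continuous P := hψ.continuous_fderiv one_ne_zero
  have hψcont : Continuous fun p : ℝ × (Fin n → ℝ) => ψ p.1 p.2 := hψ.continuous
  have hχcont : Continuous fun p : ℝ × (Fin n → ℝ) => χ p.1 p.2 := hχ.continuous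
  have hψcurve : ∀ s y, HasDerivAt (fun s' => ψ s' (χ s' y))
      (P (s, χ s y) (1, D (s, y) (1, 0))) s := by
    intro s y
    have h := (hψdiff (s, χ s y)).hasFDerivAt.comp_hasDerivAt s
      ((hasDerivAt_id s).prodMk (hv s y))
    rw [hweq] at h
    exact h
  -- ## the integrand and its derivative
  set G : ℝ → (Fin n → ℝ) → ℝ := fun s y =>
    P (s, χ s y) (1, D (s, y) (1, 0)) * ρ s y +
      ψ s (χ s y) * ((A s y).adjugate * Km s y).trace with hGdef
  have hFderiv : ∀ s y, HasDerivAt (fun s' => ψ s' (χ s' y) * ρ s' y) (G s y) s :=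
    fun s y => (hψcurve s y).mul (hρderiv s y)
  have hGcont : Continuous fun p : ℝ × (Fin n → ℝ) => G p.1 p.2 := by
    apply Continuous.add
    · apply Continuous.mul _ hρcont
      exact (hPcont.comp (continuous_fst.prodMk hχcont)).clm_apply
        (continuous_const.prodMk (hDcont.clm_apply continuous_const))
    · exact (hψcont.comp (continuous_fst.prodMk hχcont)).mul
        ((hAcont.matrix_adjugate.matrix_mul hKmcont).matrix_trace)
  have hFcont : ∀ s, Continuous fun y => ψ s (χ s y) * ρ s y := by
    intro s
    have := ((hψcont.comp (continuous_fst.prodMk hχcont)).mul hρcont).comp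
      (continuous_const.prodMk continuous_id : Continuous fun y : Fin n → ℝ => (s, y))
    exact this
  -- ## change of variables
  have hV0meas : MeasurableSet V0 := hV0open.measurableSet
  have hinj : ∀ s, Set.InjOn (χ s) V0 := fun s => ((hleft s).injective).injOn
  have hdetJ : ∀ s y, (J s y).det = ρ s y := by
    intro s y
    simp only [hρdef, hAdef]
    rw [LinearMap.det_toMatrix']
  have hCOV : ∀ (s : ℝ) (f : (Fin n → ℝ) → ℝ),
      ∫ x in χ s '' V0, f x = ∫ y in V0, ρ s y * f (χ s y) := by
    intro s f
    rw [integral_image_eq_integral_abs_det_fderiv_smul volume hV0meas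
      (fun y _ => (hJfd s y).hasFDerivWithinAt) (hinj s) f]
    apply integral_congr_ae
    filter_upwards with y
    rw [smul_eq_mul, hdetJ, abs_of_pos (hρpos s y)]
  -- ## bounds
  have hclos : IsCompact (closure V0) := hV0bdd.isCompact_closure
  have hfin : volume V0 < ⊤ := lt_of_le_of_lt (measure_mono subset_closure) hclos.measure_lt_top
  obtain ⟨M, hM⟩ := (isCompact_Icc (a := t - 1) (b := t + 1)).prod hclos
    |>.exists_bound_of_continuousOn hGcont.continuousOn
  -- ## differentiation under the integral sign
  have key := hasDerivAt_integral_of_dominated_loc_of_deriv_le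
    (μ := volume.restrict V0) (F := fun s y => ψ s (χ s y) * ρ s y)
    (F' := fun s y => G s y) (x₀ := t) (bound := fun _ => M) (Metric.ball_mem_nhds t one_pos)
    (Filter.Eventually.of_forall fun s => ((hFcont s).aestronglyMeasurable).restrict)
    (((hFcont t).continuousOn.integrableOn_compact hclos).mono_set subset_closure)
    (((hGcont.comp (continuous_const.prodMk continuous_id :
        Continuous fun y : Fin n → ℝ => (t, y))).aestronglyMeasurable).restrict)
    ?_ ?_ ?_
  · -- final conversion
    have efun : (fun s => ∫ x in χ s '' V0, ψ s x)
        = fun s => ∫ y in V0, ψ s (χ s y) * ρ s y := by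
      funext s
      rw [hCOV s (ψ s)]
      apply integral_congr_ae
      filter_upwards with y
      ring
    have eval : (∫ x in χ t '' V0,
        (deriv (fun s => ψ s x) t +
          ∑ i, fderiv ℝ (fun y => ψ t y * v t y i) x (Pi.single i 1)))
        = ∫ y in V0, G t y := by
      rw [hCOV t _]
      apply integral_congr_ae
      filter_upwards with y
      set x := χ t y with hx
      -- time partial derivative of ψ
      have hd : HasDerivAt (fun s => ψ s x) (P (t, x) (1, 0)) t := by
        have := (hψdiff (t, x)).hasFDerivAt.comp_hasDerivAt t
          ((hasDerivAt_id t).prodMk (hasDerivAt_const t x))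
        exact this
      have hderiv_eq : deriv (fun s => ψ s x) t = P (t, x) (1, 0) := hd.deriv
      -- spatial derivative of ψ t
      have hψt : HasFDerivAt (fun z => ψ t z)
          ((P (t, x)).comp (ContinuousLinearMap.inr ℝ ℝ (Fin n → ℝ))) x :=
        (hψdiff (t, x)).hasFDerivAt.comp x (hasFDerivAt_prodMk_right t x)
      set Dv := fderiv ℝ (v t) x with hDvdef
      have hvti : ∀ i : Fin n, HasFDerivAt (fun z => v t z i)
          ((ContinuousLinearMap.proj i).comp Dv) x :=
        fun i => (ContinuousLinearMap.proj (R := ℝ) (φ := fun _ : Fin n => ℝ)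
          i).hasFDerivAt.comp x (hvdiff t x).hasFDerivAt
      have hterm : ∀ i : Fin n, fderiv ℝ (fun y' => ψ t y' * v t y' i) x (Pi.single i 1)
          = ψ t x * Dv (Pi.single i 1) i + v t x i * P (t, x) (0, Pi.single i 1) := by
        intro i
        rw [(hψt.fun_mul (hvti i)).fderiv]
        simp only [ContinuousLinearMap.add_apply, ContinuousLinearMap.smul_apply,
          ContinuousLinearMap.comp_apply, ContinuousLinearMap.proj_apply,
          ContinuousLinearMap.inr_apply, smul_eq_mul]
      set Dvm := LinearMap.toMatrix' (Dv : (Fin n → ℝ) →ₗ[ℝ] (Fin n → ℝ)) with hDvmdef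
      have hsum1 : ∑ i : Fin n, Dv (Pi.single i 1) i = Dvm.trace := by
        rw [Matrix.trace]
        refine (Finset.sum_congr rfl fun i _ => ?_).symm
        simp only [Matrix.diag_apply, hDvmdef, LinearMap.toMatrix'_apply,
          ContinuousLinearMap.coe_coe, hsingle]
      have hvsum : ∑ i : Fin n, v t x i • (Pi.single i 1 : Fin n → ℝ) = v t x := by
        funext j
        simp [Finset.sum_apply, Pi.single_apply]
      have hsum2 : ∑ i : Fin n, v t x i * P (t, x) (0, Pi.single i 1)
          = P (t, x) (0, v t x) := by
        calc ∑ i : Fin n, v t x i * P (t, x) (0, Pi.single i 1)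
            = ∑ i : Fin n, ((P (t, x)).comp (ContinuousLinearMap.inr ℝ ℝ (Fin n → ℝ)))
                (v t x i • (Pi.single i 1 : Fin n → ℝ)) := by
              refine Finset.sum_congr rfl fun i _ => ?_
              rw [ContinuousLinearMap.map_smul, smul_eq_mul]
              rfl
          _ = ((P (t, x)).comp (ContinuousLinearMap.inr ℝ ℝ (Fin n → ℝ)))
                (∑ i : Fin n, v t x i • (Pi.single i 1 : Fin n → ℝ)) := by
              rw [map_sum]
          _ = P (t, x) (0, v t x) := by rw [hvsum]; rfl
      have hKmt : Km t y = Dvm * A t y := by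
        simp only [hKmdef, hAdef, hDvmdef]
        rw [hKceq t y, ← hx, ContinuousLinearMap.toLinearMap_comp, LinearMap.toMatrix'_comp]
      have htrace : ((A t y).adjugate * Km t y).trace = ρ t y * Dvm.trace := by
        rw [hKmt, ← mul_assoc, Matrix.trace_mul_cycle, Matrix.mul_adjugate, Matrix.smul_mul,
          one_mul, Matrix.trace_smul, smul_eq_mul]
      have hvx : D (t, y) (1, 0) = v t x := (hweq t y).symm
      have hsplit : P (t, x) (1, v t x) = P (t, x) (1, 0) + P (t, x) (0, v t x) := by
        rw [← map_add]
        norm_num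
      have hsumterm : ∑ i : Fin n, fderiv ℝ (fun y' => ψ t y' * v t y' i) x (Pi.single i 1)
          = ψ t x * Dvm.trace + P (t, x) (0, v t x) := by
        rw [Finset.sum_congr rfl fun i _ => hterm i, Finset.sum_add_distrib,
          ← Finset.mul_sum, hsum1, hsum2]
      rw [hderiv_eq, hsumterm]
      simp only [hGdef, hvx, htrace, hsplit, ← hx]
      ring
    rw [efun, eval]
    exact key.2
  · -- bound
    rw [ae_restrict_iff' hV0meas]
    filter_upwards with y hy
    intro s hs
    rw [Real.ball_eq_Ioo] at hs
    exact hM (s, y) ⟨Set.Ioo_subset_Icc_self hs, subset_closure hy⟩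
  · exact (integrableOn_const hfin.ne)
  · filter_upwards with y
    intro s _
    exact hFderiv s y
end
end

section
/- Curl representation of the tangential surface divergence: let ν̂ : ℝ³ → ℝ³ be a C¹ vector field with ‖ν̂(x)‖ = 1 on an open neighborhood of Σ and ν̂ = ν on Σ, and let a : ℝ³ → ℝ³ be continuously differentiable. Then at every point of Σ, ∇_Σ·a^∥ = (∇ × (ν̂ × a)) · ν, where a^∥ = a − (a·ν)ν, ∇ × denotes the curl in ℝ³, and ∇_Σ·a^∥ = g^{αβ} (∂(a^∥∘Φ)/∂u^α) · τ_β. -/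
open MeasureTheory ContDiff

noncomputable section

/-- Euclidean dot product on `ℝ³`. -/
def dot3 (a b : Fin 3 → ℝ) : ℝ := ∑ i, a i * b i

/-- Euclidean norm on `ℝ³`. -/
def norm3 (a : Fin 3 → ℝ) : ℝ := Real.sqrt (dot3 a a)

/-- Cross product on `ℝ³`. -/
def cross3 (a b : Fin 3 → ℝ) : Fin 3 → ℝ :=
  ![a 1 * b 2 - a 2 * b 1, a 2 * b 0 - a 0 * b 2, a 0 * b 1 - a 1 * b 0]

/-- Tangent vector `τ_α = ∂Φ/∂u^α` of a parametrized surface. -/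
def tangent (Φ : (Fin 2 → ℝ) → Fin 3 → ℝ) (α : Fin 2) (u : Fin 2 → ℝ) : Fin 3 → ℝ :=
  fderiv ℝ Φ u (Pi.single α 1)

/-- Surface metric tensor `g_{αβ} = τ_α · τ_β`. -/
def metric (Φ : (Fin 2 → ℝ) → Fin 3 → ℝ) (u : Fin 2 → ℝ) : Matrix (Fin 2) (Fin 2) ℝ :=
  Matrix.of fun α β => dot3 (tangent Φ α u) (tangent Φ β u)

/-- Inverse metric tensor `g^{αβ}`. -/
def metricInv (Φ : (Fin 2 → ℝ) → Fin 3 → ℝ) (u : Fin 2 → ℝ) : Matrix (Fin 2) (Fin 2) ℝ :=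
  (metric Φ u)⁻¹

/-- Unit normal `ν = (τ₁ × τ₂)/‖τ₁ × τ₂‖`. -/
def normalVec (Φ : (Fin 2 → ℝ) → Fin 3 → ℝ) (u : Fin 2 → ℝ) : Fin 3 → ℝ :=
  (norm3 (cross3 (tangent Φ 0 u) (tangent Φ 1 u)))⁻¹ •
    cross3 (tangent Φ 0 u) (tangent Φ 1 u)

/-- Second partial derivative `∂²Φ/∂u^α∂u^β`. -/
def secondDeriv (Φ : (Fin 2 → ℝ) → Fin 3 → ℝ) (α β : Fin 2) (u : Fin 2 → ℝ) : Fin 3 → ℝ :=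
  fderiv ℝ (tangent Φ β) u (Pi.single α 1)

/-- Curvature tensor `b_{αβ} = (∂²Φ/∂u^α∂u^β) · ν`. -/
def curvTensor (Φ : (Fin 2 → ℝ) → Fin 3 → ℝ) (α β : Fin 2) (u : Fin 2 → ℝ) : ℝ :=
  dot3 (secondDeriv Φ α β u) (normalVec Φ u)

/-- Mean curvature `κ_M = (1/2) g^{αβ} b_{αβ}`. -/
def meanCurv (Φ : (Fin 2 → ℝ) → Fin 3 → ℝ) (u : Fin 2 → ℝ) : ℝ :=
  (1/2) * ∑ α, ∑ β, metricInv Φ u α β * curvTensor Φ α β u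

/-- Curl of a vector field on `ℝ³`. -/
def curl3 (F : (Fin 3 → ℝ) → Fin 3 → ℝ) (x : Fin 3 → ℝ) : Fin 3 → ℝ :=
  ![fderiv ℝ (fun y => F y 2) x (Pi.single 1 1) - fderiv ℝ (fun y => F y 1) x (Pi.single 2 1),
    fderiv ℝ (fun y => F y 0) x (Pi.single 2 1) - fderiv ℝ (fun y => F y 2) x (Pi.single 0 1),
    fderiv ℝ (fun y => F y 1) x (Pi.single 0 1) - fderiv ℝ (fun y => F y 0) x (Pi.single 1 1)]

/-- Tangential part `a^∥ = a − (a·ν)ν` of an ambient vector field, as a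
function of the surface parameter. -/
def tangPart (Φ : (Fin 2 → ℝ) → Fin 3 → ℝ) (a : (Fin 3 → ℝ) → Fin 3 → ℝ) (u : Fin 2 → ℝ) :
    Fin 3 → ℝ :=
  a (Φ u) - dot3 (a (Φ u)) (normalVec Φ u) • normalVec Φ u

/-- Coordinate surface divergence `∇_Σ·b = g^{αβ} (∂b/∂u^α)·τ_β` of a vector field
defined along the surface. -/
def coordSurfDiv (Φ : (Fin 2 → ℝ) → Fin 3 → ℝ) (b : (Fin 2 → ℝ) → Fin 3 → ℝ)
    (u : Fin 2 → ℝ) : ℝ :=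
  ∑ α, ∑ β, metricInv Φ u α β * dot3 (fderiv ℝ b u (Pi.single α 1)) (tangent Φ β u)

lemma dot3_self_nonneg (v : Fin 3 → ℝ) : 0 ≤ dot3 v v := by
  simp only [dot3, Fin.sum_univ_three]; nlinarith [mul_self_nonneg (v 0), mul_self_nonneg (v 1), mul_self_nonneg (v 2)]

lemma eq_zero_of_dot3_self (v : Fin 3 → ℝ) (h : dot3 v v = 0) : v = 0 := by
  simp only [dot3, Fin.sum_univ_three] at h
  funext i; fin_cases i <;> [skip; skip; skip] <;> simp <;> nlinarith [sq_nonneg (v 0), sq_nonneg (v 1), sq_nonneg (v 2)]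

lemma lagrange (t0 t1 : Fin 3 → ℝ) :
    dot3 (cross3 t0 t1) (cross3 t0 t1) = dot3 t0 t0 * dot3 t1 t1 - dot3 t0 t1 * dot3 t0 t1 := by
  simp [dot3, cross3, Fin.sum_univ_three]; ring

lemma complete_poly (t0 t1 X : Fin 3 → ℝ) (i : Fin 3) :
    dot3 (cross3 t0 t1) (cross3 t0 t1) * X i =
      (dot3 t1 t1 * dot3 X t0 - dot3 t0 t1 * dot3 X t1) * t0 i
      + (dot3 t0 t0 * dot3 X t1 - dot3 t0 t1 * dot3 X t0) * t1 i
      + dot3 X (cross3 t0 t1) * cross3 t0 t1 i := by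
  fin_cases i <;> simp [dot3, cross3, Fin.sum_univ_three] <;> ring

lemma cross_dot_cross3 (u v w z : Fin 3 → ℝ) :
    dot3 (cross3 u v) (cross3 w z) = dot3 u w * dot3 v z - dot3 u z * dot3 v w := by
  simp [dot3, cross3, Fin.sum_univ_three]; ring

lemma cross_dot_left (t0 t1 : Fin 3 → ℝ) : dot3 (cross3 t0 t1) t0 = 0 := by
  simp [dot3, cross3, Fin.sum_univ_three]; ring

lemma cross_dot_right (t0 t1 : Fin 3 → ℝ) : dot3 (cross3 t0 t1) t1 = 0 := by
  simp [dot3, cross3, Fin.sum_univ_three]; ring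

lemma detg_ne_zero (t0 t1 : Fin 3 → ℝ) (h : LinearIndependent ℝ ![t0, t1]) :
    dot3 (cross3 t0 t1) (cross3 t0 t1) ≠ 0 := by
  rw [lagrange]
  intro hd
  rw [LinearIndependent.pair_iff] at h
  have ht0 : t0 ≠ 0 := by
    intro h0
    have := (h 1 0 (by simp [h0])).1
    norm_num at this
  have hg00 : dot3 t0 t0 ≠ 0 := fun hz => ht0 (eq_zero_of_dot3_self _ hz)
  -- w := -g01 • t0 + g00 • t1 = 0
  have hw : (-(dot3 t0 t1)) • t0 + (dot3 t0 t0) • t1 = 0 := by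
    apply eq_zero_of_dot3_self
    simp only [dot3, Fin.sum_univ_three, Pi.add_apply, Pi.smul_apply, smul_eq_mul] at hd ⊢
    nlinarith [hd]
  exact hg00 (h _ _ hw).2

lemma dot3_smul_left (s : ℝ) (v w : Fin 3 → ℝ) : dot3 (s • v) w = s * dot3 v w := by
  simp [dot3, Fin.sum_univ_three]; ring
lemma dot3_smul_right (s : ℝ) (v w : Fin 3 → ℝ) : dot3 v (s • w) = s * dot3 v w := by
  simp [dot3, Fin.sum_univ_three]; ring
lemma dot3_single_left (j : Fin 3) (w : Fin 3 → ℝ) : dot3 (Pi.single j 1) w = w j := by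
  fin_cases j <;> simp [dot3, Fin.sum_univ_three, Pi.single_apply]
lemma dot3_sub_sub (X ν Z w : Fin 3 → ℝ) (s z : ℝ) :
    dot3 (X - s • ν - z • Z) w = dot3 X w - s * dot3 ν w - z * dot3 Z w := by
  simp [dot3, Fin.sum_univ_three]; ring
lemma dot3_cross_expand (ν w a b : Fin 3 → ℝ) (c0 c1 c2 : ℝ) :
    dot3 (cross3 ν (c0 • a + c1 • b + c2 • ν)) w
      = c0 * dot3 (cross3 ν a) w + c1 * dot3 (cross3 ν b) w := by
  simp [dot3, cross3, Fin.sum_univ_three]; ring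
lemma collect3 (w m0 m1 m2 p0 p1 p2 ax ν N A : Fin 3 → ℝ) (s0 s1 s2 : ℝ)
    (hN : N = s0 • m0 + s1 • m1 + s2 • m2) (hA : A = s0 • p0 + s1 • p1 + s2 • p2) :
    s0 * dot3 (cross3 ν w) (cross3 m0 ax + cross3 ν p0)
      + s1 * dot3 (cross3 ν w) (cross3 m1 ax + cross3 ν p1)
      + s2 * dot3 (cross3 ν w) (cross3 m2 ax + cross3 ν p2)
    = dot3 N ν * dot3 ax w - dot3 ax ν * dot3 N w + dot3 ν ν * dot3 A w - dot3 A ν * dot3 ν w := by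
  subst hN hA; simp [dot3, cross3, Fin.sum_univ_three]; ring

lemma key_alg (t0 t1 ν ax A0 A1 N0 N1 m0 m1 m2 p0 p1 p2 : Fin 3 → ℝ)
    (r : ℝ) (hr : r ≠ 0)
    (hc : cross3 t0 t1 = r • ν)
    (hν : dot3 ν ν = 1)
    (hm0 : dot3 m0 ν = 0) (hm1 : dot3 m1 ν = 0) (hm2 : dot3 m2 ν = 0)
    (hA0 : A0 = t0 0 • p0 + t0 1 • p1 + t0 2 • p2)
    (hA1 : A1 = t1 0 • p0 + t1 1 • p1 + t1 2 • p2)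
    (hN0 : N0 = t0 0 • m0 + t0 1 • m1 + t0 2 • m2)
    (hN1 : N1 = t1 0 • m0 + t1 1 • m1 + t1 2 • m2) :
    (r^2)⁻¹ * (dot3 t1 t1 * dot3 (A0 - (dot3 A0 ν + dot3 ax N0) • ν - dot3 ax ν • N0) t0
      - dot3 t0 t1 * dot3 (A0 - (dot3 A0 ν + dot3 ax N0) • ν - dot3 ax ν • N0) t1
      - dot3 t0 t1 * dot3 (A1 - (dot3 A1 ν + dot3 ax N1) • ν - dot3 ax ν • N1) t0
      + dot3 t0 t0 * dot3 (A1 - (dot3 A1 ν + dot3 ax N1) • ν - dot3 ax ν • N1) t1)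
    = ν 0 * ((cross3 m1 ax + cross3 ν p1) 2 - (cross3 m2 ax + cross3 ν p2) 1)
      + ν 1 * ((cross3 m2 ax + cross3 ν p2) 0 - (cross3 m0 ax + cross3 ν p0) 2)
      + ν 2 * ((cross3 m0 ax + cross3 ν p0) 1 - (cross3 m1 ax + cross3 ν p1) 0) := by
  have hr2 : (r : ℝ)^2 ≠ 0 := pow_ne_zero _ hr
  have hd : dot3 (cross3 t0 t1) (cross3 t0 t1) = r^2 := by
    rw [hc]
    simp only [dot3, Fin.sum_univ_three, Pi.smul_apply, smul_eq_mul] at hν ⊢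
    linear_combination (r^2) * hν
  have hνt0 : dot3 ν t0 = 0 := by
    have h := cross_dot_left t0 t1
    rw [hc, dot3_smul_left] at h
    exact (mul_eq_zero.mp h).resolve_left hr
  have hνt1 : dot3 ν t1 = 0 := by
    have h := cross_dot_right t0 t1
    rw [hc, dot3_smul_left] at h
    exact (mul_eq_zero.mp h).resolve_left hr
  have hNν0 : dot3 N0 ν = 0 := by
    rw [hN0]
    simp only [dot3, Fin.sum_univ_three, Pi.add_apply, Pi.smul_apply, smul_eq_mul] at hm0 hm1 hm2 ⊢
    linear_combination t0 0 * hm0 + t0 1 * hm1 + t0 2 * hm2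
  have hNν1 : dot3 N1 ν = 0 := by
    rw [hN1]
    simp only [dot3, Fin.sum_univ_three, Pi.add_apply, Pi.smul_apply, smul_eq_mul] at hm0 hm1 hm2 ⊢
    linear_combination t1 0 * hm0 + t1 1 * hm1 + t1 2 * hm2
  -- completeness
  have hcomp : ∀ X : Fin 3 → ℝ,
      X = ((r^2)⁻¹ * (dot3 t1 t1 * dot3 X t0 - dot3 t0 t1 * dot3 X t1)) • t0
        + ((r^2)⁻¹ * (dot3 t0 t0 * dot3 X t1 - dot3 t0 t1 * dot3 X t0)) • t1
        + dot3 X ν • ν := by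
    intro X; funext i
    have hP := complete_poly t0 t1 X i
    rw [hd] at hP
    have hXc : dot3 X (cross3 t0 t1) = r * dot3 X ν := by rw [hc, dot3_smul_right]
    have hci : cross3 t0 t1 i = r * ν i := by rw [hc]; simp
    rw [hXc, hci] at hP
    simp only [Pi.add_apply, Pi.smul_apply, smul_eq_mul]
    have h2 : r^2 * X i = r^2 * (((r^2)⁻¹ * (dot3 t1 t1 * dot3 X t0 - dot3 t0 t1 * dot3 X t1)) * t0 i
        + ((r^2)⁻¹ * (dot3 t0 t0 * dot3 X t1 - dot3 t0 t1 * dot3 X t0)) * t1 i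
        + dot3 X ν * ν i) := by
      field_simp
      linear_combination hP
    exact mul_left_cancel₀ hr2 h2
  have hsingle : ∀ j : Fin 3, (Pi.single j 1 : Fin 3 → ℝ)
      = ((r^2)⁻¹ * (dot3 t1 t1 * t0 j - dot3 t0 t1 * t1 j)) • t0
        + ((r^2)⁻¹ * (dot3 t0 t0 * t1 j - dot3 t0 t1 * t0 j)) • t1
        + ν j • ν := by
    intro j
    have h := hcomp (Pi.single j 1)
    rwa [dot3_single_left, dot3_single_left, dot3_single_left] at h
  have hj : ∀ (j : Fin 3) (w : Fin 3 → ℝ),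
      dot3 (cross3 ν (Pi.single j 1)) w
        = ((r^2)⁻¹ * (dot3 t1 t1 * t0 j - dot3 t0 t1 * t1 j)) * dot3 (cross3 ν t0) w
          + ((r^2)⁻¹ * (dot3 t0 t0 * t1 j - dot3 t0 t1 * t0 j)) * dot3 (cross3 ν t1) w := by
    intro j w
    conv_lhs => rw [hsingle j]
    rw [dot3_cross_expand]
  have hbase : ν 0 * ((cross3 m1 ax + cross3 ν p1) 2 - (cross3 m2 ax + cross3 ν p2) 1)
      + ν 1 * ((cross3 m2 ax + cross3 ν p2) 0 - (cross3 m0 ax + cross3 ν p0) 2)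
      + ν 2 * ((cross3 m0 ax + cross3 ν p0) 1 - (cross3 m1 ax + cross3 ν p1) 0)
      = dot3 (cross3 ν (Pi.single 0 1)) (cross3 m0 ax + cross3 ν p0)
        + dot3 (cross3 ν (Pi.single 1 1)) (cross3 m1 ax + cross3 ν p1)
        + dot3 (cross3 ν (Pi.single 2 1)) (cross3 m2 ax + cross3 ν p2) := by
    simp [dot3, cross3, Fin.sum_univ_three, Pi.single_apply, Fin.ext_iff]
    ring
  -- the four collected sums
  have K00 := collect3 t0 m0 m1 m2 p0 p1 p2 ax ν N0 A0 (t0 0) (t0 1) (t0 2) hN0 hA0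
  have K01 := collect3 t0 m0 m1 m2 p0 p1 p2 ax ν N1 A1 (t1 0) (t1 1) (t1 2) hN1 hA1
  have K10 := collect3 t1 m0 m1 m2 p0 p1 p2 ax ν N0 A0 (t0 0) (t0 1) (t0 2) hN0 hA0
  have K11 := collect3 t1 m0 m1 m2 p0 p1 p2 ax ν N1 A1 (t1 0) (t1 1) (t1 2) hN1 hA1
  rw [hNν0, hν, hνt0] at K00
  rw [hNν0, hν, hνt1] at K10
  rw [hNν1, hν, hνt0] at K01
  rw [hNν1, hν, hνt1] at K11
  rw [dot3_sub_sub, dot3_sub_sub, dot3_sub_sub, dot3_sub_sub, hνt0, hνt1, hbase,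
    hj 0, hj 1, hj 2]
  linear_combination (-((r^2)⁻¹ * dot3 t1 t1)) * K00 + ((r^2)⁻¹ * dot3 t0 t1) * K10
    + ((r^2)⁻¹ * dot3 t0 t1) * K01 - ((r^2)⁻¹ * dot3 t0 t0) * K11

section Helpers

lemma dot3_comm (a b : Fin 3 → ℝ) : dot3 a b = dot3 b a := by
  simp [dot3, mul_comm]

lemma clm_expand3 {F : Type*} [AddCommGroup F] [Module ℝ F] [TopologicalSpace F]
    (L : (Fin 3 → ℝ) →L[ℝ] F) (v : Fin 3 → ℝ) :
    L v = v 0 • L (Pi.single 0 1) + v 1 • L (Pi.single 1 1) + v 2 • L (Pi.single 2 1) := by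
  have hv : v = v 0 • (Pi.single 0 1 : Fin 3 → ℝ) + v 1 • (Pi.single 1 1 : Fin 3 → ℝ) + v 2 • (Pi.single 2 1 : Fin 3 → ℝ) := by
    funext i; fin_cases i <;> simp [Pi.single_apply]
  conv_lhs => rw [hv]
  rw [map_add, map_add, L.map_smul, L.map_smul, L.map_smul]

end Helpers


set_option maxHeartbeats 2000000 in
set_option maxRecDepth 8000 in
/-- **Curl representation of the tangential surface divergence:**
`∇_Σ·a^∥ = (∇ × (ν̂ × a)) · ν` on `Σ`, for any `C¹` unit extension `ν̂` of the normal. -/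
theorem tangential_surface_divergence_curl
    (U : Set (Fin 2 → ℝ)) (hU : IsOpen U)
    (Φ : (Fin 2 → ℝ) → Fin 3 → ℝ)
    (hΦ : ContDiffOn ℝ ∞ Φ U)
    (hΦinj : Set.InjOn Φ U)
    (hindep : ∀ u ∈ U, LinearIndependent ℝ ![tangent Φ 0 u, tangent Φ 1 u])
    (O : Set (Fin 3 → ℝ)) (hO : IsOpen O) (hSigmaO : Φ '' U ⊆ O)
    (νhat : (Fin 3 → ℝ) → Fin 3 → ℝ)
    (hνhat : ContDiffOn ℝ 1 νhat O)
    (hunit : ∀ x ∈ O, norm3 (νhat x) = 1)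
    (hext : ∀ u ∈ U, νhat (Φ u) = normalVec Φ u)
    (a : (Fin 3 → ℝ) → Fin 3 → ℝ) (ha : ContDiff ℝ 1 a) :
    ∀ u ∈ U,
      coordSurfDiv Φ (tangPart Φ a) u =
        dot3 (curl3 (fun x => cross3 (νhat x) (a x)) (Φ u)) (normalVec Φ u) := by
  intro u hu
  have hUu : U ∈ nhds u := hU.mem_nhds hu
  have hxO : Φ u ∈ O := hSigmaO ⟨u, hu, rfl⟩
  have hOx : O ∈ nhds (Φ u) := hO.mem_nhds hxO
  have hΦd : DifferentiableAt ℝ Φ u :=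
    (hΦ.differentiableOn (by simp)).differentiableAt hUu
  have hνd : DifferentiableAt ℝ νhat (Φ u) :=
    (hνhat.differentiableOn one_ne_zero).differentiableAt hOx
  have had : DifferentiableAt ℝ a (Φ u) := (ha.differentiable one_ne_zero) (Φ u)
  have hT : HasFDerivAt Φ (fderiv ℝ Φ u) u := hΦd.hasFDerivAt
  have hnΦ : HasFDerivAt (fun v => νhat (Φ v))
      ((fderiv ℝ νhat (Φ u)).comp (fderiv ℝ Φ u)) u := hνd.hasFDerivAt.comp u hT
  have haΦ : HasFDerivAt (fun v => a (Φ v))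
      ((fderiv ℝ a (Φ u)).comp (fderiv ℝ Φ u)) u := had.hasFDerivAt.comp u hT
  have hνck := hasFDerivAt_pi'.1 hνd.hasFDerivAt
  have hack := hasFDerivAt_pi'.1 had.hasFDerivAt
  have hnΦk := hasFDerivAt_pi'.1 hnΦ
  have haΦk := hasFDerivAt_pi'.1 haΦ
  -- unit norm facts
  have honeO : ∀ y ∈ O, dot3 (νhat y) (νhat y) = 1 := fun y hy =>
    Real.sqrt_eq_one.mp (by simpa [norm3] using hunit y hy)
  have hν1 : dot3 (νhat (Φ u)) (νhat (Φ u)) = 1 := honeO _ hxO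
  -- derivative of unit constraint
  have hev : (fun y => ∑ k : Fin 3, νhat y k * νhat y k) =ᶠ[nhds (Φ u)] (fun _ => (1:ℝ)) := by
    filter_upwards [hOx] with y hy
    simpa [dot3] using honeO y hy
  have hsumd : HasFDerivAt (fun y => ∑ k : Fin 3, νhat y k * νhat y k)
      (∑ k : Fin 3, (νhat (Φ u) k • ((ContinuousLinearMap.proj k).comp (fderiv ℝ νhat (Φ u)))
        + νhat (Φ u) k • ((ContinuousLinearMap.proj k).comp (fderiv ℝ νhat (Φ u))))) (Φ u) :=
    HasFDerivAt.fun_sum (fun k _ => (hνck k).mul (hνck k))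
  have hS0 : (∑ k : Fin 3, (νhat (Φ u) k • ((ContinuousLinearMap.proj k).comp (fderiv ℝ νhat (Φ u)))
        + νhat (Φ u) k • ((ContinuousLinearMap.proj k).comp (fderiv ℝ νhat (Φ u))))) = 0 := by
    calc _ = fderiv ℝ (fun y => ∑ k : Fin 3, νhat y k * νhat y k) (Φ u) := hsumd.fderiv.symm
    _ = fderiv ℝ (fun _ => (1:ℝ)) (Φ u) := hev.fderiv_eq
    _ = 0 := fderiv_const_apply 1
  have hm : ∀ j : Fin 3, dot3 (fderiv ℝ νhat (Φ u) (Pi.single j 1)) (νhat (Φ u)) = 0 := by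
    intro j
    have h := congrFun (congrArg DFunLike.coe hS0) (Pi.single j 1)
    simp only [ContinuousLinearMap.coe_sum', Finset.sum_apply, ContinuousLinearMap.add_apply,
      ContinuousLinearMap.coe_smul', Pi.smul_apply, ContinuousLinearMap.coe_comp',
      Function.comp_apply, ContinuousLinearMap.proj_apply, smul_eq_mul,
      ContinuousLinearMap.zero_apply, Fin.sum_univ_three, Pi.zero_apply] at h
    simp only [dot3, Fin.sum_univ_three]
    linear_combination h / 2
  -- normal vector facts
  have hccnn := dot3_self_nonneg (cross3 (tangent Φ 0 u) (tangent Φ 1 u))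
  have hccne := detg_ne_zero _ _ (hindep u hu)
  have hccpos : 0 < dot3 (cross3 (tangent Φ 0 u) (tangent Φ 1 u))
      (cross3 (tangent Φ 0 u) (tangent Φ 1 u)) := lt_of_le_of_ne hccnn (Ne.symm hccne)
  have hrpos : 0 < norm3 (cross3 (tangent Φ 0 u) (tangent Φ 1 u)) := by
    simpa only [norm3] using Real.sqrt_pos.2 hccpos
  have hrne : norm3 (cross3 (tangent Φ 0 u) (tangent Φ 1 u)) ≠ 0 := ne_of_gt hrpos
  have hr2 : (norm3 (cross3 (tangent Φ 0 u) (tangent Φ 1 u)))^2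
      = dot3 (cross3 (tangent Φ 0 u) (tangent Φ 1 u)) (cross3 (tangent Φ 0 u) (tangent Φ 1 u)) := by
    simp only [norm3]; exact Real.sq_sqrt hccnn
  have hcν : cross3 (tangent Φ 0 u) (tangent Φ 1 u)
      = norm3 (cross3 (tangent Φ 0 u) (tangent Φ 1 u)) • νhat (Φ u) := by
    rw [hext u hu, normalVec, smul_smul, mul_inv_cancel₀ hrne, one_smul]
  -- metric inverse entries
  have hdet : (metric Φ u).det = (norm3 (cross3 (tangent Φ 0 u) (tangent Φ 1 u)))^2 := by
    rw [Matrix.det_fin_two]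
    simp only [metric, Matrix.of_apply]
    rw [hr2, dot3_comm (tangent Φ 1 u) (tangent Φ 0 u)]
    linear_combination -(lagrange (tangent Φ 0 u) (tangent Φ 1 u))
  have hMI : metricInv Φ u = ((norm3 (cross3 (tangent Φ 0 u) (tangent Φ 1 u)))^2)⁻¹ •
      !![dot3 (tangent Φ 1 u) (tangent Φ 1 u), -(dot3 (tangent Φ 0 u) (tangent Φ 1 u));
         -(dot3 (tangent Φ 0 u) (tangent Φ 1 u)), dot3 (tangent Φ 0 u) (tangent Φ 0 u)] := by
    rw [metricInv, Matrix.inv_def, Matrix.adjugate_fin_two, hdet, Ring.inverse_eq_inv]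
    congr 1
    ext i j
    fin_cases i <;> fin_cases j <;>
      simp [metric, dot3_comm (tangent Φ 1 u) (tangent Φ 0 u)]
  -- derivative of the tangential part
  have hdotd : HasFDerivAt (fun v => ∑ k : Fin 3, a (Φ v) k * νhat (Φ v) k)
      (∑ k : Fin 3, (a (Φ u) k • ((ContinuousLinearMap.proj k).comp
          ((fderiv ℝ νhat (Φ u)).comp (fderiv ℝ Φ u)))
        + νhat (Φ u) k • ((ContinuousLinearMap.proj k).comp
          ((fderiv ℝ a (Φ u)).comp (fderiv ℝ Φ u))))) u :=
    HasFDerivAt.fun_sum (fun k _ => (haΦk k).mul (hnΦk k))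
  have hb' : HasFDerivAt
      (fun v => fun i => a (Φ v) i - (∑ k : Fin 3, a (Φ v) k * νhat (Φ v) k) * νhat (Φ v) i)
      (ContinuousLinearMap.pi (fun i =>
        ((ContinuousLinearMap.proj i).comp ((fderiv ℝ a (Φ u)).comp (fderiv ℝ Φ u)))
        - ((∑ k : Fin 3, a (Φ u) k * νhat (Φ u) k) •
            ((ContinuousLinearMap.proj i).comp ((fderiv ℝ νhat (Φ u)).comp (fderiv ℝ Φ u)))
          + νhat (Φ u) i • (∑ k : Fin 3, (a (Φ u) k • ((ContinuousLinearMap.proj k).comp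
              ((fderiv ℝ νhat (Φ u)).comp (fderiv ℝ Φ u)))
            + νhat (Φ u) k • ((ContinuousLinearMap.proj k).comp
              ((fderiv ℝ a (Φ u)).comp (fderiv ℝ Φ u)))))))) u :=
    hasFDerivAt_pi.2 (fun i => (haΦk i).sub (hdotd.mul (hnΦk i)))
  have hbev : tangPart Φ a =ᶠ[nhds u]
      (fun v => fun i => a (Φ v) i - (∑ k : Fin 3, a (Φ v) k * νhat (Φ v) k) * νhat (Φ v) i) := by
    filter_upwards [hUu] with v hv
    funext i
    rw [tangPart, ← hext v hv]
    simp only [dot3, Pi.sub_apply, Pi.smul_apply, smul_eq_mul]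
  have hfd : fderiv ℝ (tangPart Φ a) u = ContinuousLinearMap.pi (fun i =>
        ((ContinuousLinearMap.proj i).comp ((fderiv ℝ a (Φ u)).comp (fderiv ℝ Φ u)))
        - ((∑ k : Fin 3, a (Φ u) k * νhat (Φ u) k) •
            ((ContinuousLinearMap.proj i).comp ((fderiv ℝ νhat (Φ u)).comp (fderiv ℝ Φ u)))
          + νhat (Φ u) i • (∑ k : Fin 3, (a (Φ u) k • ((ContinuousLinearMap.proj k).comp
              ((fderiv ℝ νhat (Φ u)).comp (fderiv ℝ Φ u)))
            + νhat (Φ u) k • ((ContinuousLinearMap.proj k).comp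
              ((fderiv ℝ a (Φ u)).comp (fderiv ℝ Φ u))))))) := by
    rw [hbev.fderiv_eq, hb'.fderiv]
  have hB : ∀ α : Fin 2, fderiv ℝ (tangPart Φ a) u (Pi.single α 1)
      = fderiv ℝ a (Φ u) (tangent Φ α u)
        - (dot3 (fderiv ℝ a (Φ u) (tangent Φ α u)) (νhat (Φ u))
            + dot3 (a (Φ u)) (fderiv ℝ νhat (Φ u) (tangent Φ α u))) • νhat (Φ u)
        - dot3 (a (Φ u)) (νhat (Φ u)) • fderiv ℝ νhat (Φ u) (tangent Φ α u) := by
    intro α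
    rw [hfd]
    funext i
    simp only [ContinuousLinearMap.pi_apply, ContinuousLinearMap.sub_apply,
      ContinuousLinearMap.add_apply, ContinuousLinearMap.smul_apply,
      ContinuousLinearMap.coe_sum', Finset.sum_apply, ContinuousLinearMap.coe_comp',
      Function.comp_apply, ContinuousLinearMap.proj_apply, smul_eq_mul, Fin.sum_univ_three,
      Pi.sub_apply, Pi.smul_apply, dot3, tangent]
    ring
  -- curl entries
  have hcr0 : (fun y => cross3 (νhat y) (a y) 0) = (fun y => νhat y 1 * a y 2 - νhat y 2 * a y 1) := by
    funext y; simp [cross3]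
  have hcr1 : (fun y => cross3 (νhat y) (a y) 1) = (fun y => νhat y 2 * a y 0 - νhat y 0 * a y 2) := by
    funext y; simp [cross3]
  have hcr2 : (fun y => cross3 (νhat y) (a y) 2) = (fun y => νhat y 0 * a y 1 - νhat y 1 * a y 0) := by
    funext y; simp [cross3]
  have hfd0 : HasFDerivAt (fun y => cross3 (νhat y) (a y) 0)
      ((νhat (Φ u) 1 • ((ContinuousLinearMap.proj 2).comp (fderiv ℝ a (Φ u)))
        + a (Φ u) 2 • ((ContinuousLinearMap.proj 1).comp (fderiv ℝ νhat (Φ u))))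
       - (νhat (Φ u) 2 • ((ContinuousLinearMap.proj 1).comp (fderiv ℝ a (Φ u)))
        + a (Φ u) 1 • ((ContinuousLinearMap.proj 2).comp (fderiv ℝ νhat (Φ u))))) (Φ u) := by
    rw [hcr0]; exact ((hνck 1).mul (hack 2)).sub ((hνck 2).mul (hack 1))
  have hfd1 : HasFDerivAt (fun y => cross3 (νhat y) (a y) 1)
      ((νhat (Φ u) 2 • ((ContinuousLinearMap.proj 0).comp (fderiv ℝ a (Φ u)))
        + a (Φ u) 0 • ((ContinuousLinearMap.proj 2).comp (fderiv ℝ νhat (Φ u))))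
       - (νhat (Φ u) 0 • ((ContinuousLinearMap.proj 2).comp (fderiv ℝ a (Φ u)))
        + a (Φ u) 2 • ((ContinuousLinearMap.proj 0).comp (fderiv ℝ νhat (Φ u))))) (Φ u) := by
    rw [hcr1]; exact ((hνck 2).mul (hack 0)).sub ((hνck 0).mul (hack 2))
  have hfd2 : HasFDerivAt (fun y => cross3 (νhat y) (a y) 2)
      ((νhat (Φ u) 0 • ((ContinuousLinearMap.proj 1).comp (fderiv ℝ a (Φ u)))
        + a (Φ u) 1 • ((ContinuousLinearMap.proj 0).comp (fderiv ℝ νhat (Φ u))))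
       - (νhat (Φ u) 1 • ((ContinuousLinearMap.proj 0).comp (fderiv ℝ a (Φ u)))
        + a (Φ u) 0 • ((ContinuousLinearMap.proj 1).comp (fderiv ℝ νhat (Φ u))))) (Φ u) := by
    rw [hcr2]; exact ((hνck 0).mul (hack 1)).sub ((hνck 1).mul (hack 0))
  have hC0 : ∀ j : Fin 3, fderiv ℝ (fun y => cross3 (νhat y) (a y) 0) (Φ u) (Pi.single j 1)
      = νhat (Φ u) 1 * fderiv ℝ a (Φ u) (Pi.single j 1) 2
        + a (Φ u) 2 * fderiv ℝ νhat (Φ u) (Pi.single j 1) 1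
        - (νhat (Φ u) 2 * fderiv ℝ a (Φ u) (Pi.single j 1) 1
        + a (Φ u) 1 * fderiv ℝ νhat (Φ u) (Pi.single j 1) 2) := by
    intro j
    rw [hfd0.fderiv]
    simp [ContinuousLinearMap.proj_apply]
  have hC1 : ∀ j : Fin 3, fderiv ℝ (fun y => cross3 (νhat y) (a y) 1) (Φ u) (Pi.single j 1)
      = νhat (Φ u) 2 * fderiv ℝ a (Φ u) (Pi.single j 1) 0
        + a (Φ u) 0 * fderiv ℝ νhat (Φ u) (Pi.single j 1) 2
        - (νhat (Φ u) 0 * fderiv ℝ a (Φ u) (Pi.single j 1) 2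
        + a (Φ u) 2 * fderiv ℝ νhat (Φ u) (Pi.single j 1) 0) := by
    intro j
    rw [hfd1.fderiv]
    simp [ContinuousLinearMap.proj_apply]
  have hC2 : ∀ j : Fin 3, fderiv ℝ (fun y => cross3 (νhat y) (a y) 2) (Φ u) (Pi.single j 1)
      = νhat (Φ u) 0 * fderiv ℝ a (Φ u) (Pi.single j 1) 1
        + a (Φ u) 1 * fderiv ℝ νhat (Φ u) (Pi.single j 1) 0
        - (νhat (Φ u) 1 * fderiv ℝ a (Φ u) (Pi.single j 1) 0
        + a (Φ u) 0 * fderiv ℝ νhat (Φ u) (Pi.single j 1) 1) := by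
    intro j
    rw [hfd2.fderiv]
    simp [ContinuousLinearMap.proj_apply]
  -- assemble via the key algebraic lemma
  have KEY := key_alg (tangent Φ 0 u) (tangent Φ 1 u) (νhat (Φ u)) (a (Φ u))
    (fderiv ℝ a (Φ u) (tangent Φ 0 u)) (fderiv ℝ a (Φ u) (tangent Φ 1 u)) (fderiv ℝ νhat (Φ u) (tangent Φ 0 u)) (fderiv ℝ νhat (Φ u) (tangent Φ 1 u))
    (fderiv ℝ νhat (Φ u) (Pi.single 0 1)) (fderiv ℝ νhat (Φ u) (Pi.single 1 1)) (fderiv ℝ νhat (Φ u) (Pi.single 2 1))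
    (fderiv ℝ a (Φ u) (Pi.single 0 1)) (fderiv ℝ a (Φ u) (Pi.single 1 1)) (fderiv ℝ a (Φ u) (Pi.single 2 1))
    (norm3 (cross3 (tangent Φ 0 u) (tangent Φ 1 u))) hrne hcν hν1
    (hm 0) (hm 1) (hm 2)
    (clm_expand3 (fderiv ℝ a (Φ u)) (tangent Φ 0 u))
    (clm_expand3 (fderiv ℝ a (Φ u)) (tangent Φ 1 u))
    (clm_expand3 (fderiv ℝ νhat (Φ u)) (tangent Φ 0 u))
    (clm_expand3 (fderiv ℝ νhat (Φ u)) (tangent Φ 1 u))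
  have hcurl : dot3 (curl3 (fun x => cross3 (νhat x) (a x)) (Φ u)) (νhat (Φ u))
      = νhat (Φ u) 0 * ((cross3 (fderiv ℝ νhat (Φ u) (Pi.single 1 1)) (a (Φ u)) + cross3 (νhat (Φ u)) (fderiv ℝ a (Φ u) (Pi.single 1 1))) 2 - (cross3 (fderiv ℝ νhat (Φ u) (Pi.single 2 1)) (a (Φ u)) + cross3 (νhat (Φ u)) (fderiv ℝ a (Φ u) (Pi.single 2 1))) 1) + νhat (Φ u) 1 * ((cross3 (fderiv ℝ νhat (Φ u) (Pi.single 2 1)) (a (Φ u)) + cross3 (νhat (Φ u)) (fderiv ℝ a (Φ u) (Pi.single 2 1))) 0 - (cross3 (fderiv ℝ νhat (Φ u) (Pi.single 0 1)) (a (Φ u)) + cross3 (νhat (Φ u)) (fderiv ℝ a (Φ u) (Pi.single 0 1))) 2) + νhat (Φ u) 2 * ((cross3 (fderiv ℝ νhat (Φ u) (Pi.single 0 1)) (a (Φ u)) + cross3 (νhat (Φ u)) (fderiv ℝ a (Φ u) (Pi.single 0 1))) 1 - (cross3 (fderiv ℝ νhat (Φ u) (Pi.single 1 1)) (a (Φ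 u)) + cross3 (νhat (Φ u)) (fderiv ℝ a (Φ u) (Pi.single 1 1))) 0) := by
    simp only [curl3, dot3, Fin.sum_univ_three, Matrix.cons_val_zero, Matrix.cons_val_one,
      Matrix.head_cons, Matrix.cons_val_two, Matrix.tail_cons]
    rw [hC0 1, hC0 2, hC1 0, hC1 2, hC2 0, hC2 1]
    simp only [cross3, Pi.add_apply, Matrix.cons_val_zero, Matrix.cons_val_one,
      Matrix.head_cons, Matrix.cons_val_two, Matrix.tail_cons]
    ring
  have hlhs : coordSurfDiv Φ (tangPart Φ a) u = (norm3 (cross3 (tangent Φ 0 u) (tangent Φ 1 u)) ^ 2)⁻¹ * (dot3 (tangent Φ 1 u) (tangent Φ 1 u) * dot3 (fderiv ℝ a (Φ u) (tangent Φ 0 u) - (dot3 (fderiv ℝ a (Φ u) (tangent Φ 0 u)) (νhat (Φ u)) + dot3 (a (Φ u)) (fderiv ℝ νhat (Φ u) (tangent Φ 0 u))) • νhat (Φ u) - dot3 (a (Φ u)) (νhat (Φ u)) • fderiv ℝ νhat (Φ u) (tangent Φ 0 u)) (tangent Φ 0 u) - dot3 (tangent Φ 0 u) (tangent Φ 1 u)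 * dot3 (fderiv ℝ a (Φ u) (tangent Φ 0 u) - (dot3 (fderiv ℝ a (Φ u) (tangent Φ 0 u)) (νhat (Φ u)) + dot3 (a (Φ u)) (fderiv ℝ νhat (Φ u) (tangent Φ 0 u))) • νhat (Φ u) - dot3 (a (Φ u)) (νhat (Φ u)) • fderiv ℝ νhat (Φ u) (tangent Φ 0 u)) (tangent Φ 1 u) - dot3 (tangent Φ 0 u) (tangent Φ 1 u) * dot3 (fderiv ℝ a (Φ u) (tangent Φ 1 u) - (dot3 (fderiv ℝ a (Φ u) (tangent Φ 1 u)) (νhat (Φ u)) + dot3 (a (Φ u)) (fderiv ℝ νhat (Φ u) (tangent Φ 1 u))) • νhat (Φ u) - dot3 (a (Φ u)) (νhat (Φ u)) • fderiv ℝ νhat (Φ u) (tangent Φ 1 u)) (tangent Φ 0 u) + dot3 (tangent Φ 0 u) (tangent Φ 0 u) * dot3 (fderiv ℝ a (Φ u) (tangent Φ 1 u) - (dot3 (fderiv ℝ a (Φ u) (tangent Φ 1 u)) (νhat (Φ u)) + dot3 (a (Φ u)) (fderiv ℝ νhat (Φ u) (tangent Φ 1 u))) • νhat (Φ u) - dot3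 (a (Φ u)) (νhat (Φ u)) • fderiv ℝ νhat (Φ u) (tangent Φ 1 u)) (tangent Φ 1 u)) := by
    simp only [coordSurfDiv, Fin.sum_univ_two]
    rw [hMI, hB 0, hB 1]
    simp only [Matrix.smul_apply, Matrix.of_apply, Matrix.cons_val_zero, Matrix.cons_val_one,
      Matrix.head_cons, smul_eq_mul]
    ring
  rw [← hext u hu, hlhs, hcurl]
  exact KEY
end
end

section
/- Time derivative of the surface area element: for a smooth family of surface parametrizations Φ(t,·) with surface velocity w = ∂Φ/∂t, the determinant g(t,u) of the metric tensor satisfies at every (t,u): ∂(√g)/∂t = (∇_Σ·w) √g, where ∇_Σ·w = g^{αβ} (∂w/∂u^α) · τ_β. -/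
open MeasureTheory ContDiff

noncomputable section

/-- Surface velocity `w = ∂Φ/∂t` of a moving parametrized surface. -/
def surfVel (Φ : ℝ → (Fin 2 → ℝ) → Fin 3 → ℝ) (t : ℝ) (u : Fin 2 → ℝ) : Fin 3 → ℝ :=
  deriv (fun s => Φ s u) t

/-- Auxiliary: positivity of `dot3 a a` for nonzero `a`. -/
lemma dot3_self_pos {a : Fin 3 → ℝ} (ha : a ≠ 0) : 0 < dot3 a a := by
  have h : ∃ i, a i ≠ 0 := by
    by_contra h; push_neg at h; exact ha (funext fun i => h i)
  obtain ⟨i, hi⟩ := h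
  simp only [dot3, Fin.sum_univ_three]
  fin_cases i <;> simp_all <;>
    nlinarith [mul_self_nonneg (a 0), mul_self_nonneg (a 1), mul_self_nonneg (a 2),
      mul_self_pos.mpr hi]

/-- Auxiliary: the Gram determinant of two linearly independent vectors is positive. -/
lemma gram_pos {a b : Fin 3 → ℝ} (h : LinearIndependent ℝ ![a, b]) :
    0 < dot3 a a * dot3 b b - dot3 a b * dot3 a b := by
  rw [LinearIndependent.pair_iff] at h
  have ha : a ≠ 0 := by
    intro h0; exact one_ne_zero ((h 1 0 (by simp [h0])).1)
  have hA : 0 < dot3 a a := dot3_self_pos ha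
  set A := dot3 a a with hAdef
  set C := dot3 a b with hCdef
  have hv : (fun i => A * b i - C * a i) ≠ 0 := by
    intro h0
    have := h (-C) A (by funext i; have := congrFun h0 i; simp at this ⊢; linarith)
    exact absurd this.2 (by positivity)
  have hvv : 0 < dot3 (fun i => A * b i - C * a i) (fun i => A * b i - C * a i) :=
    dot3_self_pos hv
  have hexp : dot3 (fun i => A * b i - C * a i) (fun i => A * b i - C * a i)
      = A * (A * dot3 b b - C * C) := by
    simp only [hAdef, hCdef, dot3, Fin.sum_univ_three]; ring
  rw [hexp] at hvv
  nlinarith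

/-- Auxiliary: derivative of a dot product of two curves. -/
lemma hasDerivAt_dot3 {f g : ℝ → Fin 3 → ℝ} {f' g' : Fin 3 → ℝ} {t : ℝ}
    (hf : HasDerivAt f f' t) (hg : HasDerivAt g g' t) :
    HasDerivAt (fun s => dot3 (f s) (g s)) (dot3 f' (g t) + dot3 (f t) g') t := by
  have hc : ∀ i : Fin 3, HasDerivAt (fun s => f s i) (f' i) t := fun i =>
    (ContinuousLinearMap.proj (R := ℝ) (φ := fun _ : Fin 3 => ℝ) i).hasFDerivAt.comp_hasDerivAt
      t hf
  have hd : ∀ i : Fin 3, HasDerivAt (fun s => g s i) (g' i) t := fun i =>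
    (ContinuousLinearMap.proj (R := ℝ) (φ := fun _ : Fin 3 => ℝ) i).hasFDerivAt.comp_hasDerivAt
      t hg
  have hcomb := (((hc 0).mul (hd 0)).add ((hc 1).mul (hd 1))).add ((hc 2).mul (hd 2))
  have heq : (fun s => dot3 (f s) (g s))
      = fun s => (f s 0 * g s 0 + f s 1 * g s 1) + f s 2 * g s 2 := by
    funext s; simp only [dot3, Fin.sum_univ_three]
  rw [heq]
  exact hcomb.congr_deriv (by simp only [dot3, Fin.sum_univ_three]; ring)

/-- **Time derivative of the surface area element:** `∂(√g)/∂t = (∇_Σ·w) √g`. -/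
theorem area_element_time_derivative
    (T : ℝ) (hT : 0 < T)
    (U : Set (Fin 2 → ℝ)) (hU : IsOpen U)
    (Φ : ℝ → (Fin 2 → ℝ) → Fin 3 → ℝ)
    (hΦ : ContDiff ℝ ∞ (fun p : ℝ × (Fin 2 → ℝ) => Φ p.1 p.2))
    (hΦinj : ∀ t ∈ Set.Icc 0 T, Set.InjOn (Φ t) U)
    (hindep : ∀ t ∈ Set.Icc 0 T, ∀ u ∈ U,
      LinearIndependent ℝ ![tangent (Φ t) 0 u, tangent (Φ t) 1 u]) :
    ∀ t ∈ Set.Icc 0 T, ∀ u ∈ U,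
      HasDerivAt (fun s => Real.sqrt ((metric (Φ s) u).det))
        (coordSurfDiv (Φ t) (surfVel Φ t) u * Real.sqrt ((metric (Φ t) u).det)) t := by
  intro t ht u hu
  classical
  set F : ℝ × (Fin 2 → ℝ) → Fin 3 → ℝ := fun q => Φ q.1 q.2 with hFdef
  have hFd : Differentiable ℝ F := hΦ.differentiable (by norm_num)
  have hG : ContDiff ℝ ∞ (fderiv ℝ F) := hΦ.fderiv_right (by simp)
  have hGd : Differentiable ℝ (fderiv ℝ F) := hG.differentiable (by norm_num)
  have hsym : ∀ a b, fderiv ℝ (fderiv ℝ F) (t, u) a b = fderiv ℝ (fderiv ℝ F) (t, u) b a := by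
    have h2 : (2 : WithTop ℕ∞) ≤ ∞ := by
      rw [show ((2 : WithTop ℕ∞)) = (((2 : ℕ∞)) : WithTop ℕ∞) by norm_cast]
      exact_mod_cast le_top
    exact hΦ.contDiffAt.isSymmSndFDerivAt (by simpa [minSmoothness_of_isRCLikeNormedField] using h2)
  -- tangent vectors in terms of the full derivative
  have htan : ∀ (s : ℝ) (v : Fin 2 → ℝ) (α : Fin 2),
      tangent (Φ s) α v = fderiv ℝ F (s, v) (0, Pi.single α 1) := by
    intro s v α
    have h1 : HasFDerivAt (Φ s)
        ((fderiv ℝ F (s, v)).comp (ContinuousLinearMap.inr ℝ ℝ (Fin 2 → ℝ))) v :=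
      (hFd (s, v)).hasFDerivAt.comp v (hasFDerivAt_prodMk_right s v)
    rw [tangent, h1.fderiv]
    rfl
  -- surface velocity in terms of the full derivative
  have hvel : ∀ (v : Fin 2 → ℝ), surfVel Φ t v = fderiv ℝ F (t, v) (1, 0) := by
    intro v
    have h2 : HasDerivAt (fun s : ℝ => (s, v)) ((1 : ℝ), (0 : Fin 2 → ℝ)) t := by
      simpa using HasDerivAt.prodMk (hasDerivAt_id t) (hasDerivAt_const t v)
    exact ((hFd (t, v)).hasFDerivAt.comp_hasDerivAt t h2).deriv
  -- abbreviations
  set τ : Fin 2 → Fin 3 → ℝ := fun α => fderiv ℝ F (t, u) (0, Pi.single α 1) with hτdef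
  set A : Fin 2 → Fin 3 → ℝ :=
    fun α => fderiv ℝ (fderiv ℝ F) (t, u) (1, 0) (0, Pi.single α 1) with hAdef
  -- time derivative of the tangent vectors
  have hA : ∀ α : Fin 2,
      HasDerivAt (fun s => fderiv ℝ F (s, u) (0, Pi.single α 1)) (A α) t := by
    intro α
    have h2 : HasDerivAt (fun s : ℝ => (s, u)) ((1 : ℝ), (0 : Fin 2 → ℝ)) t := by
      simpa using HasDerivAt.prodMk (hasDerivAt_id t) (hasDerivAt_const t u)
    have hGF : HasDerivAt (fun s => fderiv ℝ F (s, u))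
        (fderiv ℝ (fderiv ℝ F) (t, u) (1, 0)) t :=
      (hGd (t, u)).hasFDerivAt.comp_hasDerivAt t h2
    exact (ContinuousLinearMap.apply ℝ (Fin 3 → ℝ)
      ((0 : ℝ), Pi.single α (1 : ℝ))).hasFDerivAt.comp_hasDerivAt t hGF
  -- spatial derivative of the velocity equals it, by symmetry of second derivatives
  have hwd : ∀ α : Fin 2, fderiv ℝ (surfVel Φ t) u (Pi.single α 1) = A α := by
    intro α
    have hsv : surfVel Φ t = fun v => fderiv ℝ F (t, v) (1, 0) := funext hvel
    have h1 : HasFDerivAt (fun v => fderiv ℝ F (t, v))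
        ((fderiv ℝ (fderiv ℝ F) (t, u)).comp (ContinuousLinearMap.inr ℝ ℝ (Fin 2 → ℝ))) u :=
      (hGd (t, u)).hasFDerivAt.comp u (hasFDerivAt_prodMk_right t u)
    have h3 : HasFDerivAt (fun v => fderiv ℝ F (t, v) ((1 : ℝ), (0 : Fin 2 → ℝ)))
        ((ContinuousLinearMap.apply ℝ (Fin 3 → ℝ) ((1 : ℝ), (0 : Fin 2 → ℝ))).comp
          ((fderiv ℝ (fderiv ℝ F) (t, u)).comp (ContinuousLinearMap.inr ℝ ℝ (Fin 2 → ℝ)))) u :=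
      (ContinuousLinearMap.apply ℝ (Fin 3 → ℝ)
        ((1 : ℝ), (0 : Fin 2 → ℝ))).hasFDerivAt.comp u h1
    rw [hsv, h3.fderiv]
    have : fderiv ℝ (fderiv ℝ F) (t, u) (0, Pi.single α 1) (1, 0) = A α := (hsym _ _).symm
    simpa using this
  -- metric coefficients as functions of time
  have hm : ∀ α β : Fin 2,
      HasDerivAt (fun s => dot3 (fderiv ℝ F (s, u) (0, Pi.single α 1))
          (fderiv ℝ F (s, u) (0, Pi.single β 1)))
        (dot3 (A α) (τ β) + dot3 (τ α) (A β)) t :=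
    fun α β => hasDerivAt_dot3 (hA α) (hA β)
  -- determinant of the metric as a function of time
  have hfun : (fun s => (metric (Φ s) u).det)
      = fun s => dot3 (fderiv ℝ F (s, u) (0, Pi.single 0 1)) (fderiv ℝ F (s, u) (0, Pi.single 0 1))
          * dot3 (fderiv ℝ F (s, u) (0, Pi.single 1 1)) (fderiv ℝ F (s, u) (0, Pi.single 1 1))
        - dot3 (fderiv ℝ F (s, u) (0, Pi.single 0 1)) (fderiv ℝ F (s, u) (0, Pi.single 1 1))
          * dot3 (fderiv ℝ F (s, u) (0, Pi.single 1 1)) (fderiv ℝ F (s, u) (0, Pi.single 0 1)) := by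
    funext s
    rw [Matrix.det_fin_two]
    simp only [metric, Matrix.of_apply, htan]
  set D : ℝ := (dot3 (A 0) (τ 0) + dot3 (τ 0) (A 0)) * dot3 (τ 1) (τ 1)
      + dot3 (τ 0) (τ 0) * (dot3 (A 1) (τ 1) + dot3 (τ 1) (A 1))
      - ((dot3 (A 0) (τ 1) + dot3 (τ 0) (A 1)) * dot3 (τ 1) (τ 0)
        + dot3 (τ 0) (τ 1) * (dot3 (A 1) (τ 0) + dot3 (τ 1) (A 0))) with hDdef
  have hdet : HasDerivAt (fun s => (metric (Φ s) u).det) D t := by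
    rw [hfun, hDdef]
    exact ((hm 0 0).mul (hm 1 1)).sub ((hm 0 1).mul (hm 1 0))
  -- positivity of the determinant
  have hgpos : 0 < (metric (Φ t) u).det := by
    have hli := hindep t ht u hu
    have := gram_pos hli
    rw [Matrix.det_fin_two]
    simp only [metric, Matrix.of_apply]
    calc 0 < dot3 (tangent (Φ t) 0 u) (tangent (Φ t) 0 u)
            * dot3 (tangent (Φ t) 1 u) (tangent (Φ t) 1 u)
          - dot3 (tangent (Φ t) 0 u) (tangent (Φ t) 1 u)
            * dot3 (tangent (Φ t) 0 u) (tangent (Φ t) 1 u) := this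
      _ = _ := by rw [dot3_comm (tangent (Φ t) 1 u) (tangent (Φ t) 0 u)]
  have hsqrt : HasDerivAt (fun s => Real.sqrt ((metric (Φ s) u).det))
      (D / (2 * Real.sqrt ((metric (Φ t) u).det))) t := hdet.sqrt (ne_of_gt hgpos)
  -- identify the claimed derivative value
  convert hsqrt using 1
  -- compute `coordSurfDiv`
  have hdetval : (metric (Φ t) u).det
      = dot3 (τ 0) (τ 0) * dot3 (τ 1) (τ 1) - dot3 (τ 0) (τ 1) * dot3 (τ 1) (τ 0) := by
    rw [Matrix.det_fin_two]; simp only [metric, Matrix.of_apply, htan]; rfl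
  have hinv : ∀ α β : Fin 2, metricInv (Φ t) u α β
      = ((metric (Φ t) u).det)⁻¹ * (Matrix.adjugate (metric (Φ t) u)) α β := by
    intro α β
    rw [metricInv, Matrix.inv_def, Ring.inverse_eq_inv']
    simp [Matrix.smul_apply, smul_eq_mul]
  have hadj : Matrix.adjugate (metric (Φ t) u)
      = !![metric (Φ t) u 1 1, -(metric (Φ t) u 0 1);
           -(metric (Φ t) u 1 0), metric (Φ t) u 0 0] := Matrix.adjugate_fin_two _
  have hcsd : coordSurfDiv (Φ t) (surfVel Φ t) u
      = ((metric (Φ t) u).det)⁻¹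
        * (dot3 (τ 1) (τ 1) * dot3 (A 0) (τ 0) - dot3 (τ 0) (τ 1) * dot3 (A 0) (τ 1)
          - dot3 (τ 1) (τ 0) * dot3 (A 1) (τ 0) + dot3 (τ 0) (τ 0) * dot3 (A 1) (τ 1)) := by
    rw [coordSurfDiv]
    simp only [Fin.sum_univ_two, hwd, htan, hinv, hadj]
    simp only [metric, Matrix.of_apply, htan]
    simp [Matrix.cons_val_zero, Matrix.cons_val_one]
    ring
  rw [hcsd, hDdef, hdetval]
  have h01 : dot3 (τ 0) (τ 1) = dot3 (τ 1) (τ 0) := dot3_comm _ _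
  have hApair : ∀ α β : Fin 2, dot3 (τ α) (A β) = dot3 (A β) (τ α) := fun α β => dot3_comm _ _
  set g : ℝ := dot3 (τ 0) (τ 0) * dot3 (τ 1) (τ 1) - dot3 (τ 0) (τ 1) * dot3 (τ 1) (τ 0)
    with hgdef
  have hgpos' : 0 < g := hdetval ▸ hgpos
  have hsq : Real.sqrt g * Real.sqrt g = g := Real.mul_self_sqrt (le_of_lt hgpos')
  have hspos : 0 < Real.sqrt g := Real.sqrt_pos.mpr hgpos'
  have hginv : g⁻¹ * g = 1 := inv_mul_cancel₀ (ne_of_gt hgpos')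
  rw [hApair 0 0, hApair 0 1, hApair 1 0, hApair 1 1, h01]
  set a00 := dot3 (A 0) (τ 0) with ha00
  set a01 := dot3 (A 0) (τ 1) with ha01
  set a10 := dot3 (A 1) (τ 0) with ha10
  set a11 := dot3 (A 1) (τ 1) with ha11
  set m00 := dot3 (τ 0) (τ 0) with hm00
  set m10 := dot3 (τ 1) (τ 0) with hm10
  set m11 := dot3 (τ 1) (τ 1) with hm11
  rw [eq_div_iff (by positivity : (2 : ℝ) * Real.sqrt g ≠ 0)]
  linear_combination
    (2 * (m11 * a00 - m10 * a01 - m10 * a10 + m00 * a11) * g⁻¹) * hsq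
      + (2 * (m11 * a00 - m10 * a01 - m10 * a10 + m00 * a11)) * hginv
end
end

section
/- Divergence (Gauss–Green) theorem for a parametrized surface over a rectangle: let Φ : [0,1]² → ℝ³ be smooth (extending smoothly to a neighborhood) and injective with linearly independent tangents, and let a : ℝ³ → ℝ³ be continuously differentiable. Let γ : [0,4] → ∂([0,1]²) traverse the boundary of the unit square counterclockwise at unit speed (four straight edges). Then ∫_{[0,1]²} (∇_Σ·a^∥)(Φ(u)) √g(u) du = ∫_0^4 a(Φ(γ(s))) · ( (Φ∘γ)'(s) × ν(Φ(γ(s))) ) ds, where a^∥ = a − (a·ν)ν and ∇_Σ·a^∥ = g^{αβ} (∂(a^∥∘Φ)/∂u^α) · τ_β. The right-hand side is the line integral of a against the outward conormal ν_{∂Σ} = τ̂ × ν along the boundary curve of the surface. -/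
open MeasureTheory ContDiff

noncomputable section

/-- The counterclockwise unit-speed boundary curve of the unit square `[0,1]²`,
parametrized over `[0,4]`, consisting of the four straight edges. -/
def squareBoundary (s : ℝ) : Fin 2 → ℝ :=
  if s ≤ 1 then ![s, 0]
  else if s ≤ 2 then ![1, s - 1]
  else if s ≤ 3 then ![3 - s, 1]
  else ![0, 4 - s]

/-- The closed unit square `[0,1]²` as a subset of `ℝ²`. -/
def unitSquare : Set (Fin 2 → ℝ) := Set.pi Set.univ fun _ => Set.Icc (0:ℝ) 1

namespace SDT

@[simp] lemma dot3_eq (a b : Fin 3 → ℝ) :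
    dot3 a b = a 0 * b 0 + a 1 * b 1 + a 2 * b 2 := by
  simp [dot3, Fin.sum_univ_three]

lemma cross3_0 (a b : Fin 3 → ℝ) : cross3 a b 0 = a 1 * b 2 - a 2 * b 1 := rfl
lemma cross3_1 (a b : Fin 3 → ℝ) : cross3 a b 1 = a 2 * b 0 - a 0 * b 2 := rfl
lemma cross3_2 (a b : Fin 3 → ℝ) : cross3 a b 2 = a 0 * b 1 - a 1 * b 0 := rfl

lemma dot3_comm (a b : Fin 3 → ℝ) : dot3 a b = dot3 b a := by simp; ring

lemma cross3_anticomm (a b : Fin 3 → ℝ) : cross3 a b = - cross3 b a := by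
  funext i; fin_cases i <;> simp [cross3] <;> ring

lemma dot3_smul_right (a b : Fin 3 → ℝ) (c : ℝ) : dot3 a (c • b) = c * dot3 a b := by
  simp [Pi.smul_apply, smul_eq_mul]; ring

lemma dot3_smul_left (a b : Fin 3 → ℝ) (c : ℝ) : dot3 (c • a) b = c * dot3 a b := by
  simp [Pi.smul_apply, smul_eq_mul]; ring

lemma dot3_neg_right (a b : Fin 3 → ℝ) : dot3 a (-b) = - dot3 a b := by simp; ring

lemma dot3_sub_left (a b c : Fin 3 → ℝ) : dot3 (a - b) c = dot3 a c - dot3 b c := by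
  simp; ring

lemma dot3_add_left (a b c : Fin 3 → ℝ) : dot3 (a + b) c = dot3 a c + dot3 b c := by
  simp; ring

lemma cross3_smul_right (a b : Fin 3 → ℝ) (c : ℝ) : cross3 a (c • b) = c • cross3 a b := by
  funext i; fin_cases i <;> simp [cross3, Pi.smul_apply, smul_eq_mul] <;> ring

lemma cross3_smul_left (a b : Fin 3 → ℝ) (c : ℝ) : cross3 (c • a) b = c • cross3 a b := by
  funext i; fin_cases i <;> simp [cross3, Pi.smul_apply, smul_eq_mul] <;> ring

lemma cross3_neg_left (a b : Fin 3 → ℝ) : cross3 (-a) b = - cross3 a b := by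
  funext i; fin_cases i <;> simp [cross3] <;> ring

/-- Lagrange identity. -/
lemma lagrange (x y : Fin 3 → ℝ) :
    dot3 (cross3 x y) (cross3 x y) = dot3 x x * dot3 y y - dot3 x y * dot3 x y := by
  simp [cross3]; ring

lemma dot3_cross_left (x y : Fin 3 → ℝ) : dot3 x (cross3 x y) = 0 := by
  simp [cross3]; ring

lemma dot3_cross_right (x y : Fin 3 → ℝ) : dot3 y (cross3 x y) = 0 := by
  simp [cross3]; ring

lemma dot3_cross_self_right (x v : Fin 3 → ℝ) : dot3 v (cross3 x v) = 0 := by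
  simp [cross3]; ring

/-- triple-product expansion identity: `(x·ν)(y×z) + (y·ν)(z×x) + (z·ν)(x×y) = (x·(y×z)) ν`. -/
lemma triple_expand (x y z ν : Fin 3 → ℝ) (i : Fin 3) :
    dot3 x ν * cross3 y z i + dot3 y ν * cross3 z x i + dot3 z ν * cross3 x y i
      = dot3 x (cross3 y z) * ν i := by
  fin_cases i <;> simp [cross3] <;> ring

/-- If three vectors are orthogonal to a nonzero vector, their triple product vanishes. -/
lemma triple_zero {x y z ν : Fin 3 → ℝ} (hν : ν ≠ 0)
    (hx : dot3 x ν = 0) (hy : dot3 y ν = 0) (hz : dot3 z ν = 0) :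
    dot3 x (cross3 y z) = 0 := by
  have hne : ∃ i, ν i ≠ 0 := by
    by_contra h
    push_neg at h
    exact hν (funext h)
  obtain ⟨i, hi⟩ := hne
  have := triple_expand x y z ν i
  rw [hx, hy, hz] at this
  simp at this
  rcases this with h | h
  · simpa using h
  · exact absurd h hi

/-- vector triple product: `y × (x × y) = (y·y) x − (x·y) y`. -/
lemma cross_cross (x y : Fin 3 → ℝ) :
    cross3 y (cross3 x y) = dot3 y y • x - dot3 x y • y := by
  funext i; fin_cases i <;> simp [cross3, Pi.smul_apply, smul_eq_mul] <;> ring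

/-- `(x×y)×x = (x·x) y − (x·y) x`. -/
lemma cross_cross' (x y : Fin 3 → ℝ) :
    cross3 (cross3 x y) x = dot3 x x • y - dot3 x y • x := by
  funext i; fin_cases i <;> simp [cross3, Pi.smul_apply, smul_eq_mul] <;> ring

/-- If `x × y = 0` and `y ≠ 0` then `x` is a multiple of `y`. -/
lemma eq_smul_of_cross_eq_zero {x y : Fin 3 → ℝ} (h : cross3 x y = 0) (hy : y ≠ 0) :
    x = (dot3 x y / dot3 y y) • y := by
  have hyy : dot3 y y ≠ 0 := by
    intro h0
    apply hy
    funext i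
    have h0' := h0
    simp at h0'
    have := sq_nonneg (y 0); have := sq_nonneg (y 1); have := sq_nonneg (y 2)
    have e0 : y 0 = 0 := by nlinarith
    have e1 : y 1 = 0 := by nlinarith
    have e2 : y 2 = 0 := by nlinarith
    fin_cases i <;> simpa
  have hc := cross_cross x y
  rw [h] at hc
  simp only [cross3, Matrix.cons_val_zero] at hc
  have hc' : dot3 y y • x = dot3 x y • y := by
    have : (0 : Fin 3 → ℝ) = dot3 y y • x - dot3 x y • y := by
      rw [← hc]; funext i; fin_cases i <;> simp [cross3]
    have := this.symm
    rw [sub_eq_zero] at this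
    exact this
  funext i
  have := congrFun hc' i
  simp only [Pi.smul_apply, smul_eq_mul] at this ⊢
  have hyy' : y 0 * y 0 + y 1 * y 1 + y 2 * y 2 ≠ 0 := by simpa using hyy
  rw [dot3_eq, dot3_eq, div_mul_eq_mul_div, eq_div_iff hyy']
  simp only [dot3_eq] at this
  linarith [this]

end SDT
namespace SDT

variable {f g : (Fin 2 → ℝ) → Fin 3 → ℝ} {h k : (Fin 2 → ℝ) → ℝ} {u v : Fin 2 → ℝ}
variable {n : WithTop ℕ∞}

lemma diffAt_comp (hf : DifferentiableAt ℝ f u) (i : Fin 3) :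
    DifferentiableAt ℝ (fun u => f u i) u := differentiableAt_pi.1 hf i

lemma fderiv_comp_apply (hf : DifferentiableAt ℝ f u) (i : Fin 3) (v : Fin 2 → ℝ) :
    fderiv ℝ (fun u => f u i) u v = fderiv ℝ f u v i := by
  have : fderiv ℝ (fun u => f u i) u =
      (ContinuousLinearMap.proj (R := ℝ) (φ := fun _ : Fin 3 => ℝ) i).comp (fderiv ℝ f u) :=
    ((ContinuousLinearMap.proj (R := ℝ) (φ := fun _ : Fin 3 => ℝ) i).hasFDerivAt.comp u
      hf.hasFDerivAt).fderiv
  rw [this]; rfl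

lemma cdAt_comp (hf : ContDiffAt ℝ n f u) (i : Fin 3) :
    ContDiffAt ℝ n (fun u => f u i) u := contDiffAt_pi.1 hf i

lemma fderiv_mul_comp (hf : DifferentiableAt ℝ f u) (hg : DifferentiableAt ℝ g u)
    (i j : Fin 3) (v : Fin 2 → ℝ) :
    fderiv ℝ (fun u => f u i * g u j) u v
      = fderiv ℝ f u v i * g u j + f u i * fderiv ℝ g u v j := by
  rw [fderiv_fun_mul (diffAt_comp hf i) (diffAt_comp hg j)]
  simp [fderiv_comp_apply hf i, fderiv_comp_apply hg j]
  ring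

lemma diffAt_dot3 (hf : DifferentiableAt ℝ f u) (hg : DifferentiableAt ℝ g u) :
    DifferentiableAt ℝ (fun u => dot3 (f u) (g u)) u := by
  simp only [dot3_eq]
  exact (((diffAt_comp hf 0).mul (diffAt_comp hg 0)).add
    ((diffAt_comp hf 1).mul (diffAt_comp hg 1))).add
    ((diffAt_comp hf 2).mul (diffAt_comp hg 2))

lemma fderiv_dot3 (hf : DifferentiableAt ℝ f u) (hg : DifferentiableAt ℝ g u) (v : Fin 2 → ℝ) :
    fderiv ℝ (fun u => dot3 (f u) (g u)) u v
      = dot3 (fderiv ℝ f u v) (g u) + dot3 (f u) (fderiv ℝ g u v) := by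
  have e : (fun u => dot3 (f u) (g u))
      = fun u => (f u 0 * g u 0 + f u 1 * g u 1) + f u 2 * g u 2 := by
    funext w; rw [dot3_eq]
  rw [e, fderiv_fun_add (f := fun u => f u 0 * g u 0 + f u 1 * g u 1) (g := fun u => f u 2 * g u 2)
      (((diffAt_comp hf 0).mul (diffAt_comp hg 0)).add
      ((diffAt_comp hf 1).mul (diffAt_comp hg 1)))
      ((diffAt_comp hf 2).mul (diffAt_comp hg 2)),
    fderiv_fun_add (f := fun u => f u 0 * g u 0) (g := fun u => f u 1 * g u 1)
      ((diffAt_comp hf 0).mul (diffAt_comp hg 0))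
      ((diffAt_comp hf 1).mul (diffAt_comp hg 1))]
  simp only [ContinuousLinearMap.add_apply, fderiv_mul_comp hf hg, dot3_eq]
  ring

lemma diffAt_cross3 (hf : DifferentiableAt ℝ f u) (hg : DifferentiableAt ℝ g u) :
    DifferentiableAt ℝ (fun u => cross3 (f u) (g u)) u := by
  have hmm : ∀ (i j : Fin 3), DifferentiableAt ℝ (fun u => f u i * g u j) u :=
    fun i j => (diffAt_comp hf i).mul (diffAt_comp hg j)
  apply differentiableAt_pi.2
  intro i
  fin_cases i
  · show DifferentiableAt ℝ (fun u => cross3 (f u) (g u) 0) u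
    simp only [cross3_0]
    exact (hmm 1 2).sub (hmm 2 1)
  · show DifferentiableAt ℝ (fun u => cross3 (f u) (g u) 1) u
    simp only [cross3_1]
    exact (hmm 2 0).sub (hmm 0 2)
  · show DifferentiableAt ℝ (fun u => cross3 (f u) (g u) 2) u
    simp only [cross3_2]
    exact (hmm 0 1).sub (hmm 1 0)

lemma fderiv_cross3 (hf : DifferentiableAt ℝ f u) (hg : DifferentiableAt ℝ g u) (v : Fin 2 → ℝ) :
    fderiv ℝ (fun u => cross3 (f u) (g u)) u v
      = cross3 (fderiv ℝ f u v) (g u) + cross3 (f u) (fderiv ℝ g u v) := by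
  have hmm : ∀ (i j : Fin 3), DifferentiableAt ℝ (fun u => f u i * g u j) u :=
    fun i j => (diffAt_comp hf i).mul (diffAt_comp hg j)
  funext i
  rw [← fderiv_comp_apply (diffAt_cross3 hf hg) i v]
  fin_cases i
  · show fderiv ℝ (fun u => cross3 (f u) (g u) 0) u v = _
    simp only [cross3_0]
    rw [fderiv_fun_sub (hmm 1 2) (hmm 2 1)]
    simp only [ContinuousLinearMap.sub_apply, fderiv_mul_comp hf hg]
    simp [cross3]
    ring
  · show fderiv ℝ (fun u => cross3 (f u) (g u) 1) u v = _
    simp only [cross3_1]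
    rw [fderiv_fun_sub (hmm 2 0) (hmm 0 2)]
    simp only [ContinuousLinearMap.sub_apply, fderiv_mul_comp hf hg]
    simp [cross3]
    ring
  · show fderiv ℝ (fun u => cross3 (f u) (g u) 2) u v = _
    simp only [cross3_2]
    rw [fderiv_fun_sub (hmm 0 1) (hmm 1 0)]
    simp only [ContinuousLinearMap.sub_apply, fderiv_mul_comp hf hg]
    simp [cross3]
    ring

lemma cdAt_mul_comp (hf : ContDiffAt ℝ n f u) (hg : ContDiffAt ℝ n g u) (i j : Fin 3) :
    ContDiffAt ℝ n (fun u => f u i * g u j) u := (cdAt_comp hf i).mul (cdAt_comp hg j)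

lemma cdAt_dot3 (hf : ContDiffAt ℝ n f u) (hg : ContDiffAt ℝ n g u) :
    ContDiffAt ℝ n (fun u => dot3 (f u) (g u)) u := by
  simp only [dot3_eq]
  exact ((cdAt_mul_comp hf hg 0 0).add (cdAt_mul_comp hf hg 1 1)).add (cdAt_mul_comp hf hg 2 2)

lemma cdAt_cross3 (hf : ContDiffAt ℝ n f u) (hg : ContDiffAt ℝ n g u) :
    ContDiffAt ℝ n (fun u => cross3 (f u) (g u)) u := by
  apply contDiffAt_pi.2
  intro i
  fin_cases i
  · show ContDiffAt ℝ n (fun u => cross3 (f u) (g u) 0) u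
    simp only [cross3_0]
    exact (cdAt_mul_comp hf hg 1 2).sub (cdAt_mul_comp hf hg 2 1)
  · show ContDiffAt ℝ n (fun u => cross3 (f u) (g u) 1) u
    simp only [cross3_1]
    exact (cdAt_mul_comp hf hg 2 0).sub (cdAt_mul_comp hf hg 0 2)
  · show ContDiffAt ℝ n (fun u => cross3 (f u) (g u) 2) u
    simp only [cross3_2]
    exact (cdAt_mul_comp hf hg 0 1).sub (cdAt_mul_comp hf hg 1 0)

end SDT
namespace SDT

lemma dot3_self_eq_zero {x : Fin 3 → ℝ} : dot3 x x = 0 ↔ x = 0 := by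
  constructor
  · intro h0
    simp only [dot3_eq] at h0
    have := sq_nonneg (x 0); have := sq_nonneg (x 1); have := sq_nonneg (x 2)
    have e0 : x 0 = 0 := by nlinarith
    have e1 : x 1 = 0 := by nlinarith
    have e2 : x 2 = 0 := by nlinarith
    funext i; fin_cases i <;> simpa
  · intro h; subst h; simp

lemma dot3_self_nonneg (x : Fin 3 → ℝ) : 0 ≤ dot3 x x := by
  simp only [dot3_eq]
  nlinarith [sq_nonneg (x 0), sq_nonneg (x 1), sq_nonneg (x 2)]

lemma dot3_self_pos {x : Fin 3 → ℝ} (h : x ≠ 0) : 0 < dot3 x x :=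
  lt_of_le_of_ne (dot3_self_nonneg x) (fun h0 => h (dot3_self_eq_zero.1 h0.symm))

section Geo

variable {Φ : (Fin 2 → ℝ) → Fin 3 → ℝ} (hΦ : ContDiff ℝ ∞ Φ) {u v : Fin 2 → ℝ}

lemma one_le_infty : (1:WithTop ℕ∞) ≤ ∞ := by exact_mod_cast le_top

include hΦ

lemma contDiff_tangent (α : Fin 2) : ContDiff ℝ ∞ (tangent Φ α) := by
  have h1 : ContDiff ℝ ∞ (fderiv ℝ Φ) := hΦ.fderiv_right (by simp)
  exact h1.clm_apply contDiff_const

lemma diffAt_tangent (α : Fin 2) : DifferentiableAt ℝ (tangent Φ α) u :=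
  ((contDiff_tangent hΦ α).differentiable (by simp)).differentiableAt

lemma cdAt_tangent (α : Fin 2) : ContDiffAt ℝ 1 (tangent Φ α) u :=
  (contDiff_tangent hΦ α).contDiffAt.of_le (by norm_num)

/-- the "good" open set where the tangents have nonvanishing cross product -/
def goodSet (Φ : (Fin 2 → ℝ) → Fin 3 → ℝ) : Set (Fin 2 → ℝ) :=
  {u | cross3 (tangent Φ 0 u) (tangent Φ 1 u) ≠ 0}

lemma continuous_crossτ : Continuous fun u => cross3 (tangent Φ 0 u) (tangent Φ 1 u) := by
  have h0 := (contDiff_tangent hΦ 0).continuous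
  have h1 := (contDiff_tangent hΦ 1).continuous
  have hc : ∀ (α : Fin 2) (i : Fin 3), Continuous fun u => tangent Φ α u i := fun α i =>
    (continuous_apply i).comp (contDiff_tangent hΦ α).continuous
  apply continuous_pi
  intro i
  fin_cases i
  · show Continuous fun u => cross3 (tangent Φ 0 u) (tangent Φ 1 u) 0
    simp only [cross3_0]
    exact ((hc 0 1).mul (hc 1 2)).sub ((hc 0 2).mul (hc 1 1))
  · show Continuous fun u => cross3 (tangent Φ 0 u) (tangent Φ 1 u) 1
    simp only [cross3_1]
    exact ((hc 0 2).mul (hc 1 0)).sub ((hc 0 0).mul (hc 1 2))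
  · show Continuous fun u => cross3 (tangent Φ 0 u) (tangent Φ 1 u) 2
    simp only [cross3_2]
    exact ((hc 0 0).mul (hc 1 1)).sub ((hc 0 1).mul (hc 1 0))

lemma isOpen_goodSet : IsOpen (goodSet Φ) :=
  isOpen_compl_singleton.preimage (continuous_crossτ hΦ)

omit hΦ in
lemma mem_goodSet_of_indep (h : LinearIndependent ℝ ![tangent Φ 0 u, tangent Φ 1 u]) :
    u ∈ goodSet Φ := by
  intro hc
  rw [linearIndependent_fin2] at h
  obtain ⟨hy, hxy⟩ := h
  simp only [Matrix.cons_val_one, Matrix.head_cons, Matrix.cons_val_zero] at hy hxy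
  exact hxy _ (eq_smul_of_cross_eq_zero hc hy).symm

omit hΦ in
lemma crossτ_dot_pos (hu : u ∈ goodSet Φ) :
    0 < dot3 (cross3 (tangent Φ 0 u) (tangent Φ 1 u)) (cross3 (tangent Φ 0 u) (tangent Φ 1 u)) :=
  dot3_self_pos hu

omit hΦ in
lemma norm3_crossτ_pos (hu : u ∈ goodSet Φ) :
    0 < norm3 (cross3 (tangent Φ 0 u) (tangent Φ 1 u)) :=
  Real.sqrt_pos.2 (crossτ_dot_pos hu)

lemma cdAt_crossτ : ContDiffAt ℝ 1 (fun u => cross3 (tangent Φ 0 u) (tangent Φ 1 u)) u :=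
  cdAt_cross3 (cdAt_tangent hΦ 0) (cdAt_tangent hΦ 1)

lemma cdAt_normalVec (hu : u ∈ goodSet Φ) : ContDiffAt ℝ 1 (normalVec Φ) u := by
  have hc := cdAt_crossτ (u := u) hΦ
  have hdot : ContDiffAt ℝ 1 (fun u => dot3 (cross3 (tangent Φ 0 u) (tangent Φ 1 u))
      (cross3 (tangent Φ 0 u) (tangent Φ 1 u))) u := cdAt_dot3 hc hc
  have hnorm : ContDiffAt ℝ 1 (fun u => norm3 (cross3 (tangent Φ 0 u) (tangent Φ 1 u))) u := by
    simp only [norm3]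
    exact hdot.sqrt (ne_of_gt (crossτ_dot_pos hu))
  have : ContDiffAt ℝ 1 (fun u => (norm3 (cross3 (tangent Φ 0 u) (tangent Φ 1 u)))⁻¹) u :=
    hnorm.inv (ne_of_gt (norm3_crossτ_pos hu))
  exact this.smul hc

lemma diffAt_normalVec (hu : u ∈ goodSet Φ) : DifferentiableAt ℝ (normalVec Φ) u :=
  (cdAt_normalVec hΦ hu).differentiableAt one_ne_zero

omit hΦ in
lemma nn_eq_one (hu : u ∈ goodSet Φ) :
    dot3 (normalVec Φ u) (normalVec Φ u) = 1 := by
  have hpos := crossτ_dot_pos hu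
  rw [normalVec, dot3_smul_left, dot3_smul_right, norm3]
  have hd := Real.mul_self_sqrt (le_of_lt hpos)
  have hs : Real.sqrt (dot3 (cross3 (tangent Φ 0 u) (tangent Φ 1 u))
      (cross3 (tangent Φ 0 u) (tangent Φ 1 u))) ≠ 0 :=
    ne_of_gt (Real.sqrt_pos.2 hpos)
  rw [← mul_assoc, ← mul_inv, hd, inv_mul_cancel₀ (ne_of_gt hpos)]

omit hΦ in
lemma tn_eq_zero (hu : u ∈ goodSet Φ) (α : Fin 2) :
    dot3 (tangent Φ α u) (normalVec Φ u) = 0 := by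
  fin_cases α
  · show dot3 (tangent Φ 0 u) (normalVec Φ u) = 0
    rw [normalVec, dot3_smul_right, dot3_cross_left, mul_zero]
  · show dot3 (tangent Φ 1 u) (normalVec Φ u) = 0
    rw [normalVec, dot3_smul_right, dot3_cross_right, mul_zero]

omit hΦ in
lemma normalVec_ne_zero (hu : u ∈ goodSet Φ) : normalVec Φ u ≠ 0 := by
  intro h
  have := nn_eq_one hu
  rw [h] at this
  simp at this

omit hΦ in
lemma bn_eq_zero (a : (Fin 3 → ℝ) → Fin 3 → ℝ) (hu : u ∈ goodSet Φ) :
    dot3 (tangPart Φ a u) (normalVec Φ u) = 0 := by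
  rw [tangPart, dot3_sub_left, dot3_smul_left, nn_eq_one hu]
  ring

lemma fderiv_normal_dot (hu : u ∈ goodSet Φ) (v : Fin 2 → ℝ) :
    dot3 (fderiv ℝ (normalVec Φ) u v) (normalVec Φ u) = 0 := by
  have heq : (fun w => dot3 (normalVec Φ w) (normalVec Φ w)) =ᶠ[nhds u] fun _ => (1:ℝ) := by
    filter_upwards [(isOpen_goodSet hΦ).mem_nhds hu] with w hw
    exact nn_eq_one hw
  have h1 : fderiv ℝ (fun w => dot3 (normalVec Φ w) (normalVec Φ w)) u
      = fderiv ℝ (fun _ => (1:ℝ)) u := heq.fderiv_eq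
  have h2 := fderiv_dot3 (diffAt_normalVec hΦ hu) (diffAt_normalVec hΦ hu) v
  rw [h1] at h2
  simp only [fderiv_fun_const, Pi.zero_apply, ContinuousLinearMap.zero_apply] at h2
  have h3 := dot3_comm (fderiv ℝ (normalVec Φ) u v) (normalVec Φ u)
  linarith [h2, h3]

/-- Schwarz symmetry of second derivatives. -/
lemma schwarz :
    fderiv ℝ (tangent Φ 1) u (Pi.single 0 1) = fderiv ℝ (tangent Φ 0) u (Pi.single 1 1) := by
  have hdΦ : ∀ y, HasFDerivAt Φ (fderiv ℝ Φ y) y := fun y =>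
    ((hΦ.differentiable (by simp)) y).hasFDerivAt
  have hdF : DifferentiableAt ℝ (fderiv ℝ Φ) u :=
    ((hΦ.fderiv_right (by simp : (∞:WithTop ℕ∞) + 1 ≤ ∞)).differentiable (by simp)).differentiableAt
  have hsym := second_derivative_symmetric hdΦ hdF.hasFDerivAt
  have key : ∀ (α β : Fin 2), fderiv ℝ (tangent Φ β) u (Pi.single α 1)
      = fderiv ℝ (fderiv ℝ Φ) u (Pi.single α 1) (Pi.single β 1) := by
    intro α β
    have : tangent Φ β = fun w => (fderiv ℝ Φ w) (Pi.single β 1) := rfl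
    rw [this, fderiv_clm_apply hdF (differentiableAt_const _)]
    simp
  rw [key 0 1, key 1 0, hsym]

end Geo
end SDT
namespace SDT

lemma dot3_sub_right (a b c : Fin 3 → ℝ) : dot3 a (b - c) = dot3 a b - dot3 a c := by
  simp [dot3_eq]; ring

lemma dot3_add_right (a b c : Fin 3 → ℝ) : dot3 a (b + c) = dot3 a b + dot3 a c := by
  simp [dot3_eq]; ring

/-- The core algebraic identity behind the surface divergence theorem. -/
lemma core (t1 t2 nu b db1 db2 dt w1 w2 : Fin 3 → ℝ)
    (hc : cross3 t1 t2 ≠ 0)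
    (hnu : nu = (norm3 (cross3 t1 t2))⁻¹ • cross3 t1 t2)
    (hb : dot3 b nu = 0) (hw1 : dot3 w1 nu = 0) (hw2 : dot3 w2 nu = 0) :
    dot3 db1 (cross3 t2 nu) + (dot3 b (cross3 dt nu) + dot3 b (cross3 t2 w1))
      + (dot3 db2 (cross3 nu t1) + (dot3 b (cross3 w2 t1) + dot3 b (cross3 nu dt)))
    = ((!![dot3 t1 t1, dot3 t1 t2; dot3 t2 t1, dot3 t2 t2])⁻¹ 0 0 * dot3 db1 t1
      + ((!![dot3 t1 t1, dot3 t1 t2; dot3 t2 t1, dot3 t2 t2])⁻¹ 0 1 * dot3 db1 t2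
      + ((!![dot3 t1 t1, dot3 t1 t2; dot3 t2 t1, dot3 t2 t2])⁻¹ 1 0 * dot3 db2 t1
      + (!![dot3 t1 t1, dot3 t1 t2; dot3 t2 t1, dot3 t2 t2])⁻¹ 1 1 * dot3 db2 t2)))
      * Real.sqrt (!![dot3 t1 t1, dot3 t1 t2; dot3 t2 t1, dot3 t2 t2]).det := by
  have hd : 0 < dot3 (cross3 t1 t2) (cross3 t1 t2) := dot3_self_pos hc
  have hss := Real.mul_self_sqrt hd.le
  have hsne : Real.sqrt (dot3 (cross3 t1 t2) (cross3 t1 t2)) ≠ 0 :=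
    ne_of_gt (Real.sqrt_pos.2 hd)
  have hdt : dot3 b (cross3 nu dt) = - dot3 b (cross3 dt nu) := by
    rw [cross3_anticomm dt nu, dot3_neg_right]; ring
  have hnn : dot3 nu nu = 1 := by
    rw [hnu, dot3_smul_left, dot3_smul_right, norm3, ← mul_assoc, ← mul_inv, hss,
      inv_mul_cancel₀ (ne_of_gt hd)]
  have hnu0 : nu ≠ 0 := by intro h; rw [h] at hnn; simp at hnn
  have ht1 : dot3 t1 nu = 0 := by rw [hnu, dot3_smul_right, dot3_cross_left, mul_zero]
  have ht2 : dot3 t2 nu = 0 := by rw [hnu, dot3_smul_right, dot3_cross_right, mul_zero]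
  have h3 : dot3 b (cross3 t2 w1) = 0 := triple_zero hnu0 hb ht2 hw1
  have h5 : dot3 b (cross3 w2 t1) = 0 := triple_zero hnu0 hb hw2 ht1
  have hq1 : dot3 db1 (cross3 t2 nu)
      = (Real.sqrt (dot3 (cross3 t1 t2) (cross3 t1 t2)))⁻¹
        * (dot3 t2 t2 * dot3 db1 t1 - dot3 t1 t2 * dot3 db1 t2) := by
    rw [hnu, cross3_smul_right, cross_cross, dot3_smul_right, dot3_sub_right,
      dot3_smul_right, dot3_smul_right, norm3]
  have hq2 : dot3 db2 (cross3 nu t1)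
      = (Real.sqrt (dot3 (cross3 t1 t2) (cross3 t1 t2)))⁻¹
        * (dot3 t1 t1 * dot3 db2 t2 - dot3 t1 t2 * dot3 db2 t1) := by
    rw [hnu, cross3_smul_left, cross_cross', dot3_smul_right, dot3_sub_right,
      dot3_smul_right, dot3_smul_right, norm3]
  have hdet : (!![dot3 t1 t1, dot3 t1 t2; dot3 t2 t1, dot3 t2 t2]).det
      = dot3 (cross3 t1 t2) (cross3 t1 t2) := by
    rw [Matrix.det_fin_two_of, lagrange, dot3_comm t2 t1]
  have hinv : (!![dot3 t1 t1, dot3 t1 t2; dot3 t2 t1, dot3 t2 t2])⁻¹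
      = (dot3 (cross3 t1 t2) (cross3 t1 t2))⁻¹ •
        !![dot3 t2 t2, -(dot3 t1 t2); -(dot3 t2 t1), dot3 t1 t1] := by
    rw [Matrix.inv_def, Matrix.adjugate_fin_two, hdet, Ring.inverse_eq_inv]
    simp
  rw [hq1, hq2, h3, h5, hdt, hdet, hinv]
  simp only [Matrix.smul_apply, Matrix.of_apply, Matrix.cons_val', Matrix.cons_val_zero, Matrix.cons_val_one,
    Matrix.head_cons, Matrix.head_fin_const, Matrix.empty_val', Matrix.cons_val_fin_one,
    smul_eq_mul, dot3_comm t2 t1]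
  set S := Real.sqrt (dot3 (cross3 t1 t2) (cross3 t1 t2)) with hS
  set B11 := dot3 t1 t1
  set B12 := dot3 t1 t2
  set B22 := dot3 t2 t2
  set X1 := dot3 db1 t1
  set X2 := dot3 db1 t2
  set X3 := dot3 db2 t1
  set X4 := dot3 db2 t2
  set Y := dot3 b (cross3 dt nu)
  rw [← hss]
  field_simp
  ring

end SDT
namespace SDT

variable {Φ : (Fin 2 → ℝ) → Fin 3 → ℝ} {a : (Fin 3 → ℝ) → Fin 3 → ℝ} {u : Fin 2 → ℝ}

lemma cdAt_tangPart (hΦ : ContDiff ℝ ∞ Φ) (ha : ContDiff ℝ 1 a) (hu : u ∈ goodSet Φ) :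
    ContDiffAt ℝ 1 (tangPart Φ a) u := by
  have haΦ : ContDiffAt ℝ 1 (fun u => a (Φ u)) u :=
    ha.contDiffAt.comp u (hΦ.contDiffAt.of_le (by norm_num))
  have hn := cdAt_normalVec hΦ hu
  have hdot : ContDiffAt ℝ 1 (fun u => dot3 (a (Φ u)) (normalVec Φ u)) u := cdAt_dot3 haΦ hn
  exact haΦ.sub (hdot.smul hn)

lemma diffAt_tangPart (hΦ : ContDiff ℝ ∞ Φ) (ha : ContDiff ℝ 1 a) (hu : u ∈ goodSet Φ) :
    DifferentiableAt ℝ (tangPart Φ a) u :=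
  (cdAt_tangPart hΦ ha hu).differentiableAt one_ne_zero

lemma metric_eq (Φ : (Fin 2 → ℝ) → Fin 3 → ℝ) (u : Fin 2 → ℝ) :
    metric Φ u = !![dot3 (tangent Φ 0 u) (tangent Φ 0 u), dot3 (tangent Φ 0 u) (tangent Φ 1 u);
      dot3 (tangent Φ 1 u) (tangent Φ 0 u), dot3 (tangent Φ 1 u) (tangent Φ 1 u)] := by
  ext α β
  fin_cases α <;> fin_cases β <;> rfl

/-- The pointwise divergence identity. -/
lemma div_identity (hΦ : ContDiff ℝ ∞ Φ) (ha : ContDiff ℝ 1 a) (hu : u ∈ goodSet Φ) :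
    fderiv ℝ (fun w => dot3 (tangPart Φ a w) (cross3 (tangent Φ 1 w) (normalVec Φ w))) u
        (Pi.single 0 1)
      + fderiv ℝ (fun w => dot3 (tangPart Φ a w) (cross3 (normalVec Φ w) (tangent Φ 0 w))) u
        (Pi.single 1 1)
    = coordSurfDiv Φ (tangPart Φ a) u * Real.sqrt ((metric Φ u).det) := by
  have hbd := diffAt_tangPart hΦ ha hu
  have hnd := diffAt_normalVec hΦ hu
  have ht0 := diffAt_tangent (u := u) hΦ 0
  have ht1 := diffAt_tangent (u := u) hΦ 1
  have hcr1 : DifferentiableAt ℝ (fun w => cross3 (tangent Φ 1 w) (normalVec Φ w)) u :=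
    diffAt_cross3 ht1 hnd
  have hcr2 : DifferentiableAt ℝ (fun w => cross3 (normalVec Φ w) (tangent Φ 0 w)) u :=
    diffAt_cross3 hnd ht0
  rw [fderiv_dot3 hbd hcr1, fderiv_dot3 hbd hcr2,
    fderiv_cross3 ht1 hnd, fderiv_cross3 hnd ht0,
    dot3_add_right, dot3_add_right, schwarz hΦ]
  have hcore := core (tangent Φ 0 u) (tangent Φ 1 u) (normalVec Φ u) (tangPart Φ a u)
    (fderiv ℝ (tangPart Φ a) u (Pi.single 0 1)) (fderiv ℝ (tangPart Φ a) u (Pi.single 1 1))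
    (fderiv ℝ (tangent Φ 0) u (Pi.single 1 1))
    (fderiv ℝ (normalVec Φ) u (Pi.single 0 1)) (fderiv ℝ (normalVec Φ) u (Pi.single 1 1))
    hu rfl (bn_eq_zero a hu) (fderiv_normal_dot hΦ hu _) (fderiv_normal_dot hΦ hu _)
  rw [hcore, coordSurfDiv, metricInv, metric_eq]
  simp only [Fin.sum_univ_two]
  ring

end SDT
namespace SDT

lemma vec10 : ![(1:ℝ), 0] = Pi.single (0 : Fin 2) (1:ℝ) := by
  funext i; fin_cases i <;> simp

lemma vec01 : ![(0:ℝ), 1] = Pi.single (1 : Fin 2) (1:ℝ) := by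
  funext i; fin_cases i <;> simp

/-- congruence of interval integrals from equality on the open interval -/
lemma intInt_congr_Ioo {f g : ℝ → ℝ} {A B : ℝ} (hAB : A ≤ B)
    (h : ∀ x ∈ Set.Ioo A B, f x = g x) :
    ∫ s in A..B, f s = ∫ s in A..B, g s := by
  apply intervalIntegral.integral_congr_ae
  rw [MeasureTheory.ae_iff]
  refine measure_mono_null ?_ (measure_singleton B)
  intro x hx
  simp only [Set.mem_setOf_eq, Classical.not_imp] at hx
  obtain ⟨hmem, hne⟩ := hx
  rw [Set.uIoc_of_le hAB] at hmem
  rcases eq_or_lt_of_le hmem.2 with h1 | h1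
  · simp [h1]
  · exact absurd (h x ⟨hmem.1, h1⟩) hne

lemma ae_restrict_Ioc_of_Ioo {f g : ℝ → ℝ} {A B : ℝ} (hAB : A ≤ B)
    (h : ∀ x ∈ Set.Ioo A B, f x = g x) :
    f =ᵐ[MeasureTheory.volume.restrict (Set.uIoc A B)] g := by
  rw [Filter.EventuallyEq, MeasureTheory.ae_restrict_iff' measurableSet_uIoc]
  rw [MeasureTheory.ae_iff]
  refine measure_mono_null (t := ({A, B} : Set ℝ)) ?_ ?_
  · intro x hx
    simp only [Set.mem_setOf_eq, Classical.not_imp] at hx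
    obtain ⟨hmem, hne⟩ := hx
    rcases Set.mem_uIoc.1 hmem with h1 | h1
    · rcases eq_or_lt_of_le h1.2 with h2 | h2
      · simp [h2]
      · exact absurd (h x ⟨h1.1, h2⟩) hne
    · exact absurd (h1.2.trans hAB) (not_le.2 h1.1)
  · have : ({A, B} : Set ℝ) = {A} ∪ {B} := rfl
    rw [this]
    exact MeasureTheory.measure_union_null (measure_singleton A) (measure_singleton B)

section EdgeAlg

variable (Φ : (Fin 2 → ℝ) → Fin 3 → ℝ) (a : (Fin 3 → ℝ) → Fin 3 → ℝ) (u : Fin 2 → ℝ)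

lemma bdry_tau0 :
    dot3 (a (Φ u)) (cross3 (tangent Φ 0 u) (normalVec Φ u))
      = - dot3 (tangPart Φ a u) (cross3 (normalVec Φ u) (tangent Φ 0 u)) := by
  rw [tangPart, dot3_sub_left, dot3_smul_left, dot3_cross_left,
    cross3_anticomm (normalVec Φ u) (tangent Φ 0 u), dot3_neg_right]
  ring

lemma bdry_tau1 :
    dot3 (a (Φ u)) (cross3 (tangent Φ 1 u) (normalVec Φ u))
      = dot3 (tangPart Φ a u) (cross3 (tangent Φ 1 u) (normalVec Φ u)) := by
  rw [tangPart, dot3_sub_left, dot3_smul_left, dot3_cross_self_right]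
  ring

end EdgeAlg

section Edges

variable {Φ : (Fin 2 → ℝ) → Fin 3 → ℝ} (hΦ : ContDiff ℝ ∞ Φ) {s : ℝ}

include hΦ

lemma deriv_line (c v : Fin 2 → ℝ) (s : ℝ) :
    deriv (fun r : ℝ => Φ (c + r • v)) s = fderiv ℝ Φ (c + s • v) v := by
  have h1 : HasDerivAt (fun r : ℝ => c + r • v) v s := by
    simpa using ((hasDerivAt_id s).smul_const v).const_add c
  exact ((((hΦ.differentiable (by simp)) _).hasFDerivAt).comp_hasDerivAt s h1).deriv

omit hΦ in
lemma sb_edge1 (h : s ≤ 1) : squareBoundary s = ![s, 0] := by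
  simp [squareBoundary, h]

omit hΦ in
lemma sb_edge2 (h1 : ¬ s ≤ 1) (h2 : s ≤ 2) : squareBoundary s = ![1, s - 1] := by
  simp [squareBoundary, h1, h2]

omit hΦ in
lemma sb_edge3 (h2 : ¬ s ≤ 2) (h3 : s ≤ 3) : squareBoundary s = ![3 - s, 1] := by
  have h1 : ¬ s ≤ 1 := by intro h; exact h2 (h.trans (by norm_num))
  simp [squareBoundary, h1, h2, h3]

omit hΦ in
lemma sb_edge4 (h3 : ¬ s ≤ 3) : squareBoundary s = ![0, 4 - s] := by
  have h1 : ¬ s ≤ 1 := by intro h; exact h3 (h.trans (by norm_num))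
  have h2 : ¬ s ≤ 2 := by intro h; exact h3 (h.trans (by norm_num))
  simp [squareBoundary, h1, h2, h3]

lemma deriv_edge1 (hs : s ∈ Set.Ioo (0:ℝ) 1) :
    deriv (fun r => Φ (squareBoundary r)) s = tangent Φ 0 ![s, 0] := by
  have hline : ∀ r : ℝ, ![r, (0:ℝ)] = ![(0:ℝ), 0] + r • ![(1:ℝ), 0] := by
    intro r; funext i; fin_cases i <;> simp
  have hev : (fun r => Φ (squareBoundary r)) =ᶠ[nhds s]
      (fun r => Φ (![(0:ℝ), 0] + r • ![(1:ℝ), 0])) := by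
    filter_upwards [eventually_lt_nhds hs.2] with r hr
    rw [sb_edge1 hr.le, hline r]
  rw [hev.deriv_eq, deriv_line hΦ, ← hline s, vec10, tangent]

lemma deriv_edge2 (hs : s ∈ Set.Ioo (1:ℝ) 2) :
    deriv (fun r => Φ (squareBoundary r)) s = tangent Φ 1 ![1, s - 1] := by
  have hline : ∀ r : ℝ, ![(1:ℝ), r - 1] = ![(1:ℝ), -1] + r • ![(0:ℝ), 1] := by
    intro r; funext i; fin_cases i <;> simp <;> ring
  have hev : (fun r => Φ (squareBoundary r)) =ᶠ[nhds s]
      (fun r => Φ (![(1:ℝ), -1] + r • ![(0:ℝ), 1])) := by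
    filter_upwards [eventually_lt_nhds hs.2, eventually_gt_nhds hs.1] with r hr2 hr1
    rw [sb_edge2 (not_le.2 hr1) hr2.le, hline r]
  rw [hev.deriv_eq, deriv_line hΦ, ← hline s, vec01, tangent]

lemma deriv_edge3 (hs : s ∈ Set.Ioo (2:ℝ) 3) :
    deriv (fun r => Φ (squareBoundary r)) s = - tangent Φ 0 ![3 - s, 1] := by
  have hline : ∀ r : ℝ, ![3 - r, (1:ℝ)] = ![(3:ℝ), 1] + r • ![(-1:ℝ), 0] := by
    intro r; funext i; fin_cases i <;> simp <;> ring
  have hev : (fun r => Φ (squareBoundary r)) =ᶠ[nhds s]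
      (fun r => Φ (![(3:ℝ), 1] + r • ![(-1:ℝ), 0])) := by
    filter_upwards [eventually_lt_nhds hs.2, eventually_gt_nhds hs.1] with r hr2 hr1
    rw [sb_edge3 (not_le.2 hr1) hr2.le, hline r]
  have hneg : ![(-1:ℝ), 0] = - Pi.single (0 : Fin 2) (1:ℝ) := by
    funext i; fin_cases i <;> simp
  rw [hev.deriv_eq, deriv_line hΦ, ← hline s, hneg, map_neg, tangent]

lemma deriv_edge4 (hs : s ∈ Set.Ioo (3:ℝ) 4) :
    deriv (fun r => Φ (squareBoundary r)) s = - tangent Φ 1 ![0, 4 - s] := by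
  have hline : ∀ r : ℝ, ![(0:ℝ), 4 - r] = ![(0:ℝ), 4] + r • ![(0:ℝ), -1] := by
    intro r; funext i; fin_cases i <;> simp <;> ring
  have hev : (fun r => Φ (squareBoundary r)) =ᶠ[nhds s]
      (fun r => Φ (![(0:ℝ), 4] + r • ![(0:ℝ), -1])) := by
    filter_upwards [eventually_gt_nhds hs.1] with r hr1
    rw [sb_edge4 (not_le.2 hr1), hline r]
  have hneg : ![(0:ℝ), -1] = - Pi.single (1 : Fin 2) (1:ℝ) := by
    funext i; fin_cases i <;> simp
  rw [hev.deriv_eq, deriv_line hΦ, ← hline s, hneg, map_neg, tangent]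

end Edges
end SDT
namespace SDT

/-- the two flux components -/
def SF1 (Φ : (Fin 2 → ℝ) → Fin 3 → ℝ) (a : (Fin 3 → ℝ) → Fin 3 → ℝ) (w : Fin 2 → ℝ) : ℝ :=
  dot3 (tangPart Φ a w) (cross3 (tangent Φ 1 w) (normalVec Φ w))

def SF2 (Φ : (Fin 2 → ℝ) → Fin 3 → ℝ) (a : (Fin 3 → ℝ) → Fin 3 → ℝ) (w : Fin 2 → ℝ) : ℝ :=
  dot3 (tangPart Φ a w) (cross3 (normalVec Φ w) (tangent Φ 0 w))

variable {Φ : (Fin 2 → ℝ) → Fin 3 → ℝ} {a : (Fin 3 → ℝ) → Fin 3 → ℝ} {u : Fin 2 → ℝ}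

lemma cdAt_SF1 (hΦ : ContDiff ℝ ∞ Φ) (ha : ContDiff ℝ 1 a) (hu : u ∈ goodSet Φ) :
    ContDiffAt ℝ 1 (SF1 Φ a) u :=
  cdAt_dot3 (cdAt_tangPart hΦ ha hu) (cdAt_cross3 (cdAt_tangent hΦ 1) (cdAt_normalVec hΦ hu))

lemma cdAt_SF2 (hΦ : ContDiff ℝ ∞ Φ) (ha : ContDiff ℝ 1 a) (hu : u ∈ goodSet Φ) :
    ContDiffAt ℝ 1 (SF2 Φ a) u :=
  cdAt_dot3 (cdAt_tangPart hΦ ha hu) (cdAt_cross3 (cdAt_normalVec hΦ hu) (cdAt_tangent hΦ 0))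

lemma contOn_SF1 (hΦ : ContDiff ℝ ∞ Φ) (ha : ContDiff ℝ 1 a) :
    ContinuousOn (SF1 Φ a) (goodSet Φ) := fun x hx =>
  (cdAt_SF1 hΦ ha hx).continuousAt.continuousWithinAt

lemma contOn_SF2 (hΦ : ContDiff ℝ ∞ Φ) (ha : ContDiff ℝ 1 a) :
    ContinuousOn (SF2 Φ a) (goodSet Φ) := fun x hx =>
  (cdAt_SF2 hΦ ha hx).continuousAt.continuousWithinAt

lemma contOn_divInt (hΦ : ContDiff ℝ ∞ Φ) (ha : ContDiff ℝ 1 a) :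
    ContinuousOn (fun u => fderiv ℝ (SF1 Φ a) u (Pi.single 0 1)
      + fderiv ℝ (SF2 Φ a) u (Pi.single 1 1)) (goodSet Φ) := by
  have h1 : ContDiffOn ℝ 1 (SF1 Φ a) (goodSet Φ) := fun x hx =>
    (cdAt_SF1 hΦ ha hx).contDiffWithinAt
  have h2 : ContDiffOn ℝ 1 (SF2 Φ a) (goodSet Φ) := fun x hx =>
    (cdAt_SF2 hΦ ha hx).contDiffWithinAt
  have h1' := h1.continuousOn_fderiv_of_isOpen (isOpen_goodSet hΦ) le_rfl
  have h2' := h2.continuousOn_fderiv_of_isOpen (isOpen_goodSet hΦ) le_rfl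
  exact (((ContinuousLinearMap.apply ℝ ℝ (Pi.single (0:Fin 2) (1:ℝ))).continuous.comp_continuousOn
    h1').add
    ((ContinuousLinearMap.apply ℝ ℝ (Pi.single (1:Fin 2) (1:ℝ))).continuous.comp_continuousOn h2'))

lemma div_identity' (hΦ : ContDiff ℝ ∞ Φ) (ha : ContDiff ℝ 1 a) (hu : u ∈ goodSet Φ) :
    fderiv ℝ (SF1 Φ a) u (Pi.single 0 1) + fderiv ℝ (SF2 Φ a) u (Pi.single 1 1)
      = coordSurfDiv Φ (tangPart Φ a) u * Real.sqrt ((metric Φ u).det) :=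
  div_identity hΦ ha hu

lemma bdry_tau0' (Φ : (Fin 2 → ℝ) → Fin 3 → ℝ) (a : (Fin 3 → ℝ) → Fin 3 → ℝ) (u : Fin 2 → ℝ) :
    dot3 (a (Φ u)) (cross3 (tangent Φ 0 u) (normalVec Φ u)) = - SF2 Φ a u :=
  bdry_tau0 Φ a u

lemma bdry_tau1' (Φ : (Fin 2 → ℝ) → Fin 3 → ℝ) (a : (Fin 3 → ℝ) → Fin 3 → ℝ) (u : Fin 2 → ℝ) :
    dot3 (a (Φ u)) (cross3 (tangent Φ 1 u) (normalVec Φ u)) = SF1 Φ a u :=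
  bdry_tau1 Φ a u

end SDT

open SDT

/-- **Divergence (Gauss–Green) theorem for a parametrized surface over a rectangle:**
`∫_{[0,1]²} (∇_Σ·a^∥)(Φ(u)) √g du = ∫_0^4 a(Φ(γ(s))) · ((Φ∘γ)'(s) × ν(γ(s))) ds`. -/
theorem surface_divergence_theorem_unit_square
    (Φ : (Fin 2 → ℝ) → Fin 3 → ℝ)
    (hΦ : ContDiff ℝ ∞ Φ)
    (hΦinj : Set.InjOn Φ unitSquare)
    (hindep : ∀ u ∈ unitSquare, LinearIndependent ℝ ![tangent Φ 0 u, tangent Φ 1 u])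
    (a : (Fin 3 → ℝ) → Fin 3 → ℝ) (ha : ContDiff ℝ 1 a) :
    ∫ u in unitSquare,
        coordSurfDiv Φ (tangPart Φ a) u * Real.sqrt ((metric Φ u).det)
      = ∫ s in (0:ℝ)..4,
          dot3 (a (Φ (squareBoundary s)))
            (cross3 (deriv (fun r => Φ (squareBoundary r)) s)
              (normalVec Φ (squareBoundary s))) := by
  have hKgood : unitSquare ⊆ goodSet Φ := fun u hu => mem_goodSet_of_indep (hindep u hu)
  have hmeasK : MeasurableSet unitSquare := MeasurableSet.univ_pi fun _ => measurableSet_Icc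
  have hmem : ∀ x y : ℝ, x ∈ Set.Icc (0:ℝ) 1 → y ∈ Set.Icc (0:ℝ) 1 →
      ![x, y] ∈ unitSquare := by
    intro x y hx hy i _
    fin_cases i
    · exact hx
    · exact hy
  -- Step 1 : pointwise divergence identity under the integral
  have hstep1 : (∫ u in unitSquare,
        coordSurfDiv Φ (tangPart Φ a) u * Real.sqrt ((metric Φ u).det))
      = ∫ u in unitSquare, (fderiv ℝ (SF1 Φ a) u (Pi.single 0 1)
          + fderiv ℝ (SF2 Φ a) u (Pi.single 1 1)) := by
    refine MeasureTheory.setIntegral_congr_fun hmeasK ?_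
    intro u hu
    exact (div_identity' hΦ ha (hKgood hu)).symm
  -- Step 2 : transfer to ℝ × ℝ
  have hxx : ∀ x : Fin 2 → ℝ, ![x 0, x 1] = x := by
    intro x; funext i; fin_cases i <;> rfl
  have hpre : (MeasurableEquiv.finTwoArrow : (Fin 2 → ℝ) ≃ᵐ ℝ × ℝ) ⁻¹'
      (Set.Icc ((0:ℝ),(0:ℝ)) ((1:ℝ),(1:ℝ))) = unitSquare := by
    ext x
    constructor
    · intro hx
      have hx' : ((0:ℝ),(0:ℝ)) ≤ (x 0, x 1) ∧ (x 0, x 1) ≤ ((1:ℝ),(1:ℝ)) := hx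
      intro i _
      fin_cases i
      · exact ⟨hx'.1.1, hx'.2.1⟩
      · exact ⟨hx'.1.2, hx'.2.2⟩
    · intro hx
      have h0 := hx 0 (Set.mem_univ _)
      have h1 := hx 1 (Set.mem_univ _)
      exact ⟨⟨h0.1, h1.1⟩, ⟨h0.2, h1.2⟩⟩
  have htrans : ∀ D : (Fin 2 → ℝ) → ℝ,
      (∫ u in unitSquare, D u)
        = ∫ p in Set.Icc ((0:ℝ),(0:ℝ)) ((1:ℝ),(1:ℝ)), D ![p.1, p.2] := by
    intro D
    rw [← hpre,
      ← (MeasureTheory.volume_preserving_finTwoArrow ℝ).setIntegral_preimage_emb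
        (MeasurableEquiv.measurableEmbedding _) (fun p => D ![p.1, p.2]) _]
    refine MeasureTheory.setIntegral_congr_fun (hpre ▸ hmeasK) ?_
    intro x _
    exact congrArg D (hxx x).symm
  -- the linear map p ↦ ![p.1, p.2]
  set L : (ℝ × ℝ) →L[ℝ] (Fin 2 → ℝ) :=
    ContinuousLinearMap.pi ![ContinuousLinearMap.fst ℝ ℝ ℝ, ContinuousLinearMap.snd ℝ ℝ ℝ]
    with hLdef
  have hLapp : ∀ p : ℝ × ℝ, L p = ![p.1, p.2] := by
    intro p; funext i; fin_cases i <;> rfl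
  have hL10 : L ((1:ℝ), (0:ℝ)) = Pi.single (0:Fin 2) (1:ℝ) := by rw [hLapp]; exact vec10
  have hL01 : L ((0:ℝ), (1:ℝ)) = Pi.single (1:Fin 2) (1:ℝ) := by rw [hLapp]; exact vec01
  have hσeq : (fun p : ℝ × ℝ => (![p.1, p.2] : Fin 2 → ℝ)) = ⇑L :=
    funext fun p => (hLapp p).symm
  have hσmem : ∀ p : ℝ × ℝ, p ∈ Set.Icc ((0:ℝ),(0:ℝ)) ((1:ℝ),(1:ℝ)) →
      (![p.1, p.2] : Fin 2 → ℝ) ∈ unitSquare := by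
    intro p hp
    exact hmem _ _ ⟨hp.1.1, hp.2.1⟩ ⟨hp.1.2, hp.2.2⟩
  have hσgood : ∀ p : ℝ × ℝ, p ∈ Set.Icc ((0:ℝ),(0:ℝ)) ((1:ℝ),(1:ℝ)) →
      (![p.1, p.2] : Fin 2 → ℝ) ∈ goodSet Φ := fun p hp => hKgood (hσmem p hp)
  have hσcontOn : ContinuousOn (fun p : ℝ × ℝ => (![p.1, p.2] : Fin 2 → ℝ))
      (Set.Icc ((0:ℝ),(0:ℝ)) ((1:ℝ),(1:ℝ))) := by
    rw [hσeq]; exact L.continuous.continuousOn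
  have hIoosub : ∀ x : ℝ × ℝ, x ∈ Set.Ioo (0:ℝ) 1 ×ˢ Set.Ioo (0:ℝ) 1 →
      x ∈ Set.Icc ((0:ℝ),(0:ℝ)) ((1:ℝ),(1:ℝ)) := by
    intro x hx
    exact ⟨⟨hx.1.1.le, hx.2.1.le⟩, ⟨hx.1.2.le, hx.2.2.le⟩⟩
  have hHdF : ∀ (F : (Fin 2 → ℝ) → ℝ), (∀ w ∈ goodSet Φ, ContDiffAt ℝ 1 F w) →
      ∀ x ∈ Set.Ioo ((0:ℝ),(0:ℝ)).1 ((1:ℝ),(1:ℝ)).1 ×ˢ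
        Set.Ioo ((0:ℝ),(0:ℝ)).2 ((1:ℝ),(1:ℝ)).2 \ (∅ : Set (ℝ×ℝ)),
      HasFDerivAt (fun p : ℝ × ℝ => F ![p.1, p.2])
        ((fderiv ℝ F ![x.1, x.2]).comp L) x := by
    intro F hF x hx
    have hg : (![x.1, x.2] : Fin 2 → ℝ) ∈ goodSet Φ :=
      hσgood x (hIoosub x hx.1)
    have hdF : HasFDerivAt F (fderiv ℝ F (L x)) (L x) := by
      rw [hLapp]
      exact ((hF _ hg).differentiableAt one_ne_zero).hasFDerivAt
    have hcomp := hdF.comp x L.hasFDerivAt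
    have heq : F ∘ ⇑L = fun p : ℝ × ℝ => F ![p.1, p.2] := by
      funext p; simp [hLapp]
    rw [heq, hLapp] at hcomp
    exact hcomp
  have Hi : MeasureTheory.IntegrableOn
      (fun x : ℝ × ℝ => ((fderiv ℝ (SF1 Φ a) ![x.1, x.2]).comp L) ((1:ℝ),(0:ℝ))
        + ((fderiv ℝ (SF2 Φ a) ![x.1, x.2]).comp L) ((0:ℝ),(1:ℝ)))
      (Set.Icc ((0:ℝ),(0:ℝ)) ((1:ℝ),(1:ℝ))) := by
    have hcont := (contOn_divInt hΦ ha).comp hσcontOn hσgood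
    have h2 := hcont.integrableOn_compact (μ := MeasureTheory.volume) isCompact_Icc
    refine h2.congr_fun ?_ measurableSet_Icc
    intro x _
    simp [ContinuousLinearMap.comp_apply, hL10, hL01]
  have hdiv := MeasureTheory.integral_divergence_prod_Icc_of_hasFDerivAt_off_countable_of_le
    (fun p : ℝ × ℝ => SF1 Φ a ![p.1, p.2]) (fun p : ℝ × ℝ => SF2 Φ a ![p.1, p.2])
    (fun x : ℝ × ℝ => (fderiv ℝ (SF1 Φ a) ![x.1, x.2]).comp L)
    (fun x : ℝ × ℝ => (fderiv ℝ (SF2 Φ a) ![x.1, x.2]).comp L)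
    ((0:ℝ),(0:ℝ)) ((1:ℝ),(1:ℝ)) (by constructor <;> norm_num) ∅ Set.countable_empty
    ((contOn_SF1 hΦ ha).comp hσcontOn hσgood)
    ((contOn_SF2 hΦ ha).comp hσcontOn hσgood)
    (hHdF _ (fun w hw => cdAt_SF1 hΦ ha hw))
    (hHdF _ (fun w hw => cdAt_SF2 hΦ ha hw))
    Hi
  simp only [ContinuousLinearMap.comp_apply, hL10, hL01] at hdiv
  -- boundary edges
  set G : ℝ → ℝ := fun s => dot3 (a (Φ (squareBoundary s)))
      (cross3 (deriv (fun r => Φ (squareBoundary r)) s) (normalVec Φ (squareBoundary s))) with hG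
  have hE1 : ∀ s ∈ Set.Ioo (0:ℝ) 1, G s = - SF2 Φ a ![s, 0] := by
    intro s hs
    rw [hG]
    simp only
    rw [sb_edge1 hs.2.le, deriv_edge1 hΦ hs, bdry_tau0']
  have hE2 : ∀ s ∈ Set.Ioo (1:ℝ) 2, G s = SF1 Φ a ![1, s - 1] := by
    intro s hs
    rw [hG]
    simp only
    rw [sb_edge2 (not_le.2 hs.1) hs.2.le, deriv_edge2 hΦ hs, bdry_tau1']
  have hE3 : ∀ s ∈ Set.Ioo (2:ℝ) 3, G s = SF2 Φ a ![3 - s, 1] := by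
    intro s hs
    rw [hG]
    simp only
    rw [sb_edge3 (not_le.2 hs.1) hs.2.le, deriv_edge3 hΦ hs, cross3_neg_left, dot3_neg_right,
      bdry_tau0']
    ring
  have hE4 : ∀ s ∈ Set.Ioo (3:ℝ) 4, G s = - SF1 Φ a ![0, 4 - s] := by
    intro s hs
    rw [hG]
    simp only
    rw [sb_edge4 (not_le.2 hs.1), deriv_edge4 hΦ hs, cross3_neg_left, dot3_neg_right, bdry_tau1']
  -- continuity of the edge parametrizations
  have hcont1 : Continuous (fun s : ℝ => (![s, 0] : Fin 2 → ℝ)) := by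
    apply continuous_pi; intro i; fin_cases i
    · exact continuous_id
    · exact continuous_const
  have hcont2 : Continuous (fun s : ℝ => (![1, s - 1] : Fin 2 → ℝ)) := by
    apply continuous_pi; intro i; fin_cases i
    · exact continuous_const
    · exact continuous_id.sub continuous_const
  have hcont3 : Continuous (fun s : ℝ => (![3 - s, 1] : Fin 2 → ℝ)) := by
    apply continuous_pi; intro i; fin_cases i
    · exact continuous_const.sub continuous_id
    · exact continuous_const
  have hcont4 : Continuous (fun s : ℝ => (![0, 4 - s] : Fin 2 → ℝ)) := by
    apply continuous_pi; intro i; fin_cases i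
    · exact continuous_const
    · exact continuous_const.sub continuous_id
  -- integrability and evaluation on each edge
  have hH1 : ContinuousOn (fun s : ℝ => - SF2 Φ a ![s, 0]) (Set.uIcc (0:ℝ) 1) := by
    rw [Set.uIcc_of_le (by norm_num)]
    exact ((contOn_SF2 hΦ ha).comp hcont1.continuousOn
      (fun s hs => hKgood (hmem _ _ hs ⟨le_rfl, zero_le_one⟩))).neg
  have hII1 : IntervalIntegrable G MeasureTheory.volume 0 1 :=
    (hH1.intervalIntegrable).congr_ae (ae_restrict_Ioc_of_Ioo (by norm_num)
      (fun x hx => (hE1 x hx).symm))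
  have hI1 : ∫ s in (0:ℝ)..1, G s = - ∫ x in (0:ℝ)..1, SF2 Φ a ![x, 0] := by
    rw [intInt_congr_Ioo (by norm_num) hE1, intervalIntegral.integral_neg]
  have hH2 : ContinuousOn (fun s : ℝ => SF1 Φ a ![1, s - 1]) (Set.uIcc (1:ℝ) 2) := by
    rw [Set.uIcc_of_le (by norm_num)]
    exact (contOn_SF1 hΦ ha).comp hcont2.continuousOn
      (fun s hs => hKgood (hmem _ _ ⟨zero_le_one, le_rfl⟩ ⟨by linarith [hs.1], by linarith [hs.2]⟩))
  have hII2 : IntervalIntegrable G MeasureTheory.volume 1 2 :=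
    (hH2.intervalIntegrable).congr_ae (ae_restrict_Ioc_of_Ioo (by norm_num)
      (fun x hx => (hE2 x hx).symm))
  have hI2 : ∫ s in (1:ℝ)..2, G s = ∫ y in (0:ℝ)..1, SF1 Φ a ![1, y] := by
    rw [intInt_congr_Ioo (by norm_num) hE2]
    have h := intervalIntegral.integral_comp_sub_right (a := (1:ℝ)) (b := 2)
      (fun y => SF1 Φ a ![1, y]) 1
    norm_num at h
    exact h
  have hH3 : ContinuousOn (fun s : ℝ => SF2 Φ a ![3 - s, 1]) (Set.uIcc (2:ℝ) 3) := by
    rw [Set.uIcc_of_le (by norm_num)]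
    exact (contOn_SF2 hΦ ha).comp hcont3.continuousOn
      (fun s hs => hKgood (hmem _ _ ⟨by linarith [hs.2], by linarith [hs.1]⟩ ⟨zero_le_one, le_rfl⟩))
  have hII3 : IntervalIntegrable G MeasureTheory.volume 2 3 :=
    (hH3.intervalIntegrable).congr_ae (ae_restrict_Ioc_of_Ioo (by norm_num)
      (fun x hx => (hE3 x hx).symm))
  have hI3 : ∫ s in (2:ℝ)..3, G s = ∫ x in (0:ℝ)..1, SF2 Φ a ![x, 1] := by
    rw [intInt_congr_Ioo (by norm_num) hE3]
    have h := intervalIntegral.integral_comp_sub_left (a := (2:ℝ)) (b := 3)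
      (fun y => SF2 Φ a ![y, 1]) 3
    norm_num at h
    exact h
  have hH4 : ContinuousOn (fun s : ℝ => - SF1 Φ a ![0, 4 - s]) (Set.uIcc (3:ℝ) 4) := by
    rw [Set.uIcc_of_le (by norm_num)]
    exact ((contOn_SF1 hΦ ha).comp hcont4.continuousOn
      (fun s hs => hKgood (hmem _ _ ⟨le_rfl, zero_le_one⟩
        ⟨by linarith [hs.2], by linarith [hs.1]⟩))).neg
  have hII4 : IntervalIntegrable G MeasureTheory.volume 3 4 :=
    (hH4.intervalIntegrable).congr_ae (ae_restrict_Ioc_of_Ioo (by norm_num)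
      (fun x hx => (hE4 x hx).symm))
  have hI4 : ∫ s in (3:ℝ)..4, G s = - ∫ y in (0:ℝ)..1, SF1 Φ a ![0, y] := by
    rw [intInt_congr_Ioo (by norm_num) hE4]
    have h := intervalIntegral.integral_comp_sub_left (a := (3:ℝ)) (b := 4)
      (fun y => SF1 Φ a ![0, y]) 4
    norm_num at h
    rw [intervalIntegral.integral_neg, h]
  -- assemble
  rw [hstep1, htrans _]
  rw [← intervalIntegral.integral_add_adjacent_intervals hII1 (hII2.trans (hII3.trans hII4)),
    ← intervalIntegral.integral_add_adjacent_intervals hII2 (hII3.trans hII4),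
    ← intervalIntegral.integral_add_adjacent_intervals hII3 hII4,
    hI1, hI2, hI3, hI4]
  rw [hdiv]
  ring
end
end

section
/- Leibniz rule for an integral with a moving internal discontinuity: let σ : [0,T] → ℝ be continuously differentiable with α < σ(t) < β for all t, and let h₁, h₂ : [0,T] × ℝ → ℝ be continuously differentiable. Define h(t,y) = h₁(t,y) for y < σ(t) and h(t,y) = h₂(t,y) for y > σ(t). Then t ↦ ∫_α^β h(t,y) dy is differentiable and d/dt ∫_α^β h(t,y) dy = ∫_α^{σ(t)} ∂h₁/∂t (t,y) dy + ∫_{σ(t)}^β ∂h₂/∂t (t,y) dy + [ h₁(t,σ(t)) − h₂(t,σ(t)) ] σ'(t). -/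
open MeasureTheory intervalIntegral

noncomputable section

open Set Metric

/-- partial derivative in the first variable via fderiv of the uncurried map -/
lemma aux_hasDerivAt_fst (g : ℝ → ℝ → ℝ)
    (hg : ContDiff ℝ 1 (fun p : ℝ × ℝ => g p.1 p.2)) (s y : ℝ) :
    HasDerivAt (fun u => g u y)
      ((fderiv ℝ (fun p : ℝ × ℝ => g p.1 p.2) (s, y)) (1, 0)) s := by
  have h1 : HasFDerivAt (fun p : ℝ × ℝ => g p.1 p.2)
      (fderiv ℝ (fun p : ℝ × ℝ => g p.1 p.2) (s, y)) (s, y) :=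
    (hg.differentiable one_ne_zero (s, y)).hasFDerivAt
  have h2 : HasDerivAt (fun u : ℝ => (u, y)) ((1 : ℝ), (0 : ℝ)) s :=
    (hasDerivAt_id s).prodMk (hasDerivAt_const s y)
  exact h1.comp_hasDerivAt s h2

/-- Differentiation under the integral sign, fixed endpoints, C¹ integrand. -/
lemma aux_fixed (g : ℝ → ℝ → ℝ)
    (hg : ContDiff ℝ 1 (fun p : ℝ × ℝ => g p.1 p.2)) (a b t : ℝ) :
    HasDerivAt (fun s => ∫ y in a..b, g s y)
      (∫ y in a..b, deriv (fun s => g s y) t) t := by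
  set H : ℝ × ℝ → ℝ := fun p => g p.1 p.2 with hH
  have hK : IsCompact (Icc (t - 1) (t + 1) ×ˢ uIcc a b) := isCompact_Icc.prod isCompact_uIcc
  obtain ⟨M, hM⟩ := hK.exists_bound_of_continuousOn ((hg.continuous_fderiv one_ne_zero).continuousOn)
  have key : HasDerivAt (fun s => ∫ y in a..b, g s y)
      (∫ y in a..b, (fderiv ℝ H (t, y)) (1, 0)) t := by
    refine (intervalIntegral.hasDerivAt_integral_of_dominated_loc_of_deriv_le (F := fun s y => g s y)
      (F' := fun s y => (fderiv ℝ H (s, y)) (1, 0)) (bound := fun _ => M)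
      (Metric.ball_mem_nhds t one_pos) ?_ ?_ ?_ ?_ ?_ ?_).2
    · exact Filter.Eventually.of_forall fun s =>
        ((hg.continuous.comp (Continuous.prodMk_right s)).aestronglyMeasurable)
    · exact ((hg.continuous.comp (Continuous.prodMk_right t)).intervalIntegrable a b)
    · exact (((hg.continuous_fderiv one_ne_zero).comp
        (Continuous.prodMk_right t)).clm_apply continuous_const).aestronglyMeasurable
    · refine Filter.Eventually.of_forall fun y hy s hs => ?_
      have h1 : ‖(fderiv ℝ H (s, y)) (1, 0)‖ ≤ ‖fderiv ℝ H (s, y)‖ * ‖((1 : ℝ), (0 : ℝ))‖ :=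
        (fderiv ℝ H (s, y)).le_opNorm _
      have h2 : ‖((1 : ℝ), (0 : ℝ))‖ = 1 := by simp [Prod.norm_def]
      have hmem : (s, y) ∈ Icc (t - 1) (t + 1) ×ˢ uIcc a b := by
        constructor
        · have := abs_lt.1 (by simpa [Real.dist_eq] using mem_ball.1 hs)
          constructor <;> linarith [this.1, this.2]
        · exact uIoc_subset_uIcc hy
      refine le_trans h1 ?_
      rw [h2, mul_one]
      exact hM _ hmem
    · exact intervalIntegrable_const
    · exact Filter.Eventually.of_forall fun y hy s hs => aux_hasDerivAt_fst g hg s y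
  have : (∫ y in a..b, (fderiv ℝ H (t, y)) (1, 0)) = ∫ y in a..b, deriv (fun s => g s y) t :=
    intervalIntegral.integral_congr fun y _ => ((aux_hasDerivAt_fst g hg t y).deriv).symm
  rwa [this] at key

/-- Moving endpoint part. -/
lemma aux_moving (g : ℝ → ℝ → ℝ)
    (hg : ContDiff ℝ 1 (fun p : ℝ × ℝ => g p.1 p.2))
    (σ : ℝ → ℝ) (hσ : ContDiff ℝ 1 σ) (t : ℝ) :
    HasDerivAt (fun s => ∫ y in σ t..σ s, g s y) (g t (σ t) * deriv σ t) t := by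
  set H : ℝ × ℝ → ℝ := fun p => g p.1 p.2 with hH
  set c := σ t with hc
  have hgtc : Continuous (fun y => g t y) := hg.continuous.comp (Continuous.prodMk_right t)
  -- the "frozen parameter" part C
  have hG : HasDerivAt (fun x => ∫ y in c..x, g t y) (g t c) c :=
    intervalIntegral.integral_hasDerivAt_right (hgtc.intervalIntegrable c c)
      (hgtc.stronglyMeasurableAtFilter _ _) hgtc.continuousAt
  have hσd : HasDerivAt σ (deriv σ t) t := (hσ.differentiable one_ne_zero t).hasDerivAt
  have hC : HasDerivAt (fun s => ∫ y in c..σ s, g t y) (g t c * deriv σ t) t :=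
    hG.comp t hσd
  -- the remainder D
  have hQ : IsCompact (Icc (t - 1) (t + 1) ×ˢ Icc (c - 1) (c + 1)) :=
    isCompact_Icc.prod isCompact_Icc
  obtain ⟨M, hM⟩ := hQ.exists_bound_of_continuousOn ((hg.continuous_fderiv one_ne_zero).continuousOn)
  set L : NNReal := ⟨max M 0, le_max_right _ _⟩ with hL
  have hLip : LipschitzOnWith L H (Icc (t - 1) (t + 1) ×ˢ Icc (c - 1) (c + 1)) := by
    refine Convex.lipschitzOnWith_of_nnnorm_fderiv_le
      (fun x _ => hg.differentiable one_ne_zero x) (fun x hx => ?_)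
      ((convex_Icc _ _).prod (convex_Icc _ _))
    have : ‖fderiv ℝ H x‖ ≤ max M 0 := le_trans (hM x hx) (le_max_left _ _)
    exact this
  have hD : HasDerivAt (fun s => ∫ y in c..σ s, (g s y - g t y)) 0 t := by
    rw [hasDerivAt_iff_isLittleO]
    simp only [← hc, intervalIntegral.integral_same, sub_zero, smul_zero, sub_zero]
    rw [Asymptotics.isLittleO_iff]
    intro ε hε
    have hLpos : (0 : ℝ) < (L : ℝ) + 1 := by positivity
    have hev1 : ∀ᶠ s in nhds t, |σ s - c| < 1 := by
      have := hσ.continuous.continuousAt (x := t)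
      have := Metric.tendsto_nhds.1 this 1 one_pos
      simpa [Real.dist_eq, hc] using this
    have hev2 : ∀ᶠ s in nhds t, |σ s - c| < ε / ((L : ℝ) + 1) := by
      have := hσ.continuous.continuousAt (x := t)
      have := Metric.tendsto_nhds.1 this _ (div_pos hε hLpos)
      simpa [Real.dist_eq, hc] using this
    filter_upwards [hev1, hev2, Metric.ball_mem_nhds t one_pos] with s h1 h2 h3
    have hst : |s - t| < 1 := by simpa [Real.dist_eq] using mem_ball.1 h3
    have hbound : ∀ y ∈ Set.uIoc c (σ s), ‖g s y - g t y‖ ≤ (L : ℝ) * |s - t| := by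
      intro y hy
      have hyIcc : y ∈ Icc (c - 1) (c + 1) := by
        rcases hy with ⟨hy1, hy2⟩
        have hσs : c - 1 ≤ σ s ∧ σ s ≤ c + 1 := by
          have := abs_lt.1 h1; constructor <;> linarith [this.1, this.2]
        constructor
        · have : min c (σ s) ≥ c - 1 := le_min (by linarith) hσs.1
          linarith [lt_of_le_of_lt this.le hy1, this.trans hy1.le]
        · exact le_trans hy2 (max_le (by linarith) hσs.2)
      have hmem1 : ((s, y) : ℝ × ℝ) ∈ Icc (t - 1) (t + 1) ×ˢ Icc (c - 1) (c + 1) := by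
        refine ⟨?_, hyIcc⟩
        have := abs_lt.1 hst; constructor <;> (simp only []; linarith [this.1, this.2])
      have hmem2 : ((t, y) : ℝ × ℝ) ∈ Icc (t - 1) (t + 1) ×ˢ Icc (c - 1) (c + 1) :=
        ⟨⟨by linarith, by linarith⟩, hyIcc⟩
      have := hLip.dist_le_mul _ hmem1 _ hmem2
      have hdist : dist ((s, y) : ℝ × ℝ) ((t, y) : ℝ × ℝ) = |s - t| := by
        simp [Prod.dist_eq, Real.dist_eq]
      rw [hdist] at this
      simpa [H, Real.dist_eq, Real.norm_eq_abs] using this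
    have hnorm := intervalIntegral.norm_integral_le_of_norm_le_const hbound
    calc ‖∫ y in c..σ s, (g s y - g t y)‖ ≤ (L : ℝ) * |s - t| * |σ s - c| := hnorm
      _ ≤ (L : ℝ) * |s - t| * (ε / ((L : ℝ) + 1)) := by
          apply mul_le_mul_of_nonneg_left h2.le (by positivity)
      _ ≤ ε * ‖s - t‖ := by
          rw [Real.norm_eq_abs]
          have h4 : (L : ℝ) / ((L : ℝ) + 1) ≤ 1 := by
            rw [div_le_one hLpos]; linarith
          have : (L : ℝ) * |s - t| * (ε / ((L : ℝ) + 1))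
              = ((L : ℝ) / ((L : ℝ) + 1)) * (ε * |s - t|) := by ring
          rw [this]
          exact mul_le_of_le_one_left (by positivity) h4
  have hsum := hC.add hD
  rw [add_zero] at hsum
  refine hsum.congr_of_eventuallyEq (Filter.Eventually.of_forall fun s => ?_)
  have hII1 : IntervalIntegrable (fun y => g t y) volume c (σ s) :=
    hgtc.intervalIntegrable _ _
  have hII2 : IntervalIntegrable (fun y => g s y - g t y) volume c (σ s) :=
    ((hg.continuous.comp (Continuous.prodMk_right s)).sub hgtc).intervalIntegrable _ _
  show (∫ y in c..σ s, g s y) = (∫ y in c..σ s, g t y) + ∫ y in c..σ s, (g s y - g t y)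
  rw [← intervalIntegral.integral_add hII1 hII2]
  simp

/-- **Leibniz rule for an integral with a moving internal discontinuity:**
for `h(t,y) = h₁(t,y)` below `y = σ(t)` and `h₂(t,y)` above,
`d/dt ∫_α^β h dy = ∫_α^{σ(t)} ∂_t h₁ dy + ∫_{σ(t)}^β ∂_t h₂ dy
  + [h₁(t,σ(t)) − h₂(t,σ(t))] σ'(t)`. -/
theorem leibniz_rule_moving_discontinuity
    (T : ℝ) (hT : 0 < T) (α β : ℝ)
    (σ : ℝ → ℝ) (hσ : ContDiff ℝ 1 σ)
    (hσrange : ∀ t ∈ Set.Icc 0 T, α < σ t ∧ σ t < β)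
    (h₁ h₂ : ℝ → ℝ → ℝ)
    (hh₁ : ContDiff ℝ 1 (fun p : ℝ × ℝ => h₁ p.1 p.2))
    (hh₂ : ContDiff ℝ 1 (fun p : ℝ × ℝ => h₂ p.1 p.2)) :
    ∀ t ∈ Set.Icc 0 T,
      HasDerivAt
        (fun s => ∫ y in α..β, if y < σ s then h₁ s y else h₂ s y)
        ((∫ y in α..(σ t), deriv (fun s => h₁ s y) t) +
          (∫ y in (σ t)..β, deriv (fun s => h₂ s y) t) +
          (h₁ t (σ t) - h₂ t (σ t)) * deriv σ t) t := by
  intro t ht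
  obtain ⟨hα, hβ⟩ := hσrange t ht
  have hc₁ : Continuous (fun p : ℝ × ℝ => h₁ p.1 p.2) := hh₁.continuous
  have hc₂ : Continuous (fun p : ℝ × ℝ => h₂ p.1 p.2) := hh₂.continuous
  have H1 : HasDerivAt (fun s => ∫ y in α..σ s, h₁ s y)
      ((∫ y in α..(σ t), deriv (fun s => h₁ s y) t) + h₁ t (σ t) * deriv σ t) t := by
    have hA := aux_fixed h₁ hh₁ α (σ t) t
    have hB := aux_moving h₁ hh₁ σ hσ t
    refine (hA.add hB).congr_of_eventuallyEq (Filter.Eventually.of_forall fun s => ?_)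
    have i1 : IntervalIntegrable (fun y => h₁ s y) volume α (σ t) :=
      (hc₁.comp (Continuous.prodMk_right s)).intervalIntegrable _ _
    have i2 : IntervalIntegrable (fun y => h₁ s y) volume (σ t) (σ s) :=
      (hc₁.comp (Continuous.prodMk_right s)).intervalIntegrable _ _
    exact (integral_add_adjacent_intervals i1 i2).symm
  have H2 : HasDerivAt (fun s => ∫ y in σ s..β, h₂ s y)
      ((∫ y in (σ t)..β, deriv (fun s => h₂ s y) t) - h₂ t (σ t) * deriv σ t) t := by
    have hA := aux_fixed h₂ hh₂ (σ t) β t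
    have hB := aux_moving h₂ hh₂ σ hσ t
    refine (hA.sub hB).congr_of_eventuallyEq (Filter.Eventually.of_forall fun s => ?_)
    have i1 : IntervalIntegrable (fun y => h₂ s y) volume (σ t) β :=
      (hc₂.comp (Continuous.prodMk_right s)).intervalIntegrable _ _
    have i2 : IntervalIntegrable (fun y => h₂ s y) volume (σ t) (σ s) :=
      (hc₂.comp (Continuous.prodMk_right s)).intervalIntegrable _ _
    exact (integral_interval_sub_left i1 i2).symm
  have hev : (fun s => ∫ y in α..β, if y < σ s then h₁ s y else h₂ s y)
      =ᶠ[nhds t] (fun s => (∫ y in α..σ s, h₁ s y) + ∫ y in σ s..β, h₂ s y) := by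
    have hopen : ∀ᶠ s in nhds t, σ s ∈ Ioo α β :=
      hσ.continuous.continuousAt (x := t) (Ioo_mem_nhds hα hβ)
    filter_upwards [hopen] with s hs
    have hne : ∀ᵐ y : ℝ, y ≠ σ s := by
      refine (MeasureTheory.ae_iff).2 ?_
      simp only [not_not, Set.setOf_eq_eq_singleton]
      exact Real.volume_singleton
    have e1 : ∀ᵐ y : ℝ, y ∈ Set.uIoc α (σ s) →
        (if y < σ s then h₁ s y else h₂ s y) = h₁ s y := by
      filter_upwards [hne] with y hy hyI
      rw [Set.uIoc_of_le hs.1.le] at hyI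
      exact if_pos (lt_of_le_of_ne hyI.2 hy)
    have e2 : ∀ᵐ y : ℝ, y ∈ Set.uIoc (σ s) β →
        (if y < σ s then h₁ s y else h₂ s y) = h₂ s y := by
      refine Filter.Eventually.of_forall fun y hyI => ?_
      rw [Set.uIoc_of_le hs.2.le] at hyI
      exact if_neg (not_lt.2 hyI.1.le)
    have i1 : IntervalIntegrable (fun y => if y < σ s then h₁ s y else h₂ s y)
        volume α (σ s) :=
      ((hc₁.comp (Continuous.prodMk_right s)).intervalIntegrable α (σ s)).congr_ae
        (Filter.EventuallyEq.symm ((ae_restrict_iff' measurableSet_uIoc).2 e1))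
    have i2 : IntervalIntegrable (fun y => if y < σ s then h₁ s y else h₂ s y)
        volume (σ s) β :=
      ((hc₂.comp (Continuous.prodMk_right s)).intervalIntegrable (σ s) β).congr_ae
        (Filter.EventuallyEq.symm ((ae_restrict_iff' measurableSet_uIoc).2 e2))
    calc (∫ y in α..β, if y < σ s then h₁ s y else h₂ s y)
        = (∫ y in α..σ s, if y < σ s then h₁ s y else h₂ s y)
          + ∫ y in σ s..β, if y < σ s then h₁ s y else h₂ s y :=
          (integral_add_adjacent_intervals i1 i2).symm
      _ = (∫ y in α..σ s, h₁ s y) + ∫ y in σ s..β, h₂ s y := by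
          rw [intervalIntegral.integral_congr_ae e1, intervalIntegral.integral_congr_ae e2]
  have := (H1.add H2).congr_of_eventuallyEq hev
  exact this.congr_deriv (by ring)
end
end

section
/- Generalized Rankine–Hugoniot jump condition in one space dimension: let p : [0,T] → ℝ be continuously differentiable, and let ψ₁, ψ₂, v₁, v₂, j₁, j₂ : [0,T] × ℝ → ℝ be continuously differentiable; define ψ, v, j by (ψ,v,j) = (ψ₁,v₁,j₁) for x < p(t) and = (ψ₂,v₂,j₂) for x > p(t), and write ⟦f⟧(t) = f₂(t,p(t)) − f₁(t,p(t)). Let ξ : [0,T] × ℝ → ℝ be continuous and ψ_p, ξ_p : [0,T] → ℝ with ψ_p continuously differentiable. Assume the integral balance law: for all a < b and all t with a < p(t) < b, d/dt [ ∫_a^b ψ(t,x) dx + ψ_p(t) ] = (ψ v + j)(t,a) − (ψ v + j)(t,b) + ∫_a^b ξ(t,x) dx + ξ_p(t). Then for every t ∈ (0,T): ψ_p'(t) − ξ_p(t) = p'(t) ⟦ψ⟧(t) − ⟦ψ v + j⟧(t). -/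
open MeasureTheory intervalIntegral

open Set Filter Topology

noncomputable section

namespace RH1D

def pd (f : ℝ → ℝ → ℝ) : ℝ → ℝ → ℝ :=
  fun s x => fderiv ℝ (fun q : ℝ × ℝ => f q.1 q.2) (s, x) (1, 0)

lemma cont_slice {f : ℝ → ℝ → ℝ} (hf : Continuous (fun q : ℝ × ℝ => f q.1 q.2)) (s : ℝ) :
    Continuous (f s) := hf.comp (Continuous.prodMk_right s)

lemma pd_cont {f : ℝ → ℝ → ℝ} (hf : ContDiff ℝ 1 (fun q : ℝ × ℝ => f q.1 q.2)) :
    Continuous (fun q : ℝ × ℝ => pd f q.1 q.2) :=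
  (hf.continuous_fderiv one_ne_zero).clm_apply continuous_const

lemma pd_hasDerivAt {f : ℝ → ℝ → ℝ} (hf : ContDiff ℝ 1 (fun q : ℝ × ℝ => f q.1 q.2))
    (s x : ℝ) : HasDerivAt (fun u => f u x) (pd f s x) s := by
  have h1 : HasFDerivAt (fun q : ℝ × ℝ => f q.1 q.2)
      (fderiv ℝ (fun q : ℝ × ℝ => f q.1 q.2) (s, x)) (s, x) :=
    (hf.differentiable one_ne_zero (s, x)).hasFDerivAt
  have h2 : HasDerivAt (fun u : ℝ => (u, x)) ((1 : ℝ), (0 : ℝ)) s :=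
    (hasDerivAt_id s).prodMk (hasDerivAt_const s x)
  exact h1.comp_hasDerivAt s h2

/-- Derivative of a parametric interval integral with fixed endpoints. -/
lemma L1 {f : ℝ → ℝ → ℝ} (hf : ContDiff ℝ 1 (fun q : ℝ × ℝ => f q.1 q.2)) (c d t : ℝ) :
    HasDerivAt (fun s => ∫ x in c..d, f s x) (∫ x in c..d, pd f t x) t := by
  -- bound for pd f on a compact neighborhood
  obtain ⟨C, hC⟩ : ∃ C, ∀ q ∈ (Icc (t-1) (t+1) ×ˢ uIcc c d), ‖pd f q.1 q.2‖ ≤ C := by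
    have hcomp : IsCompact (Icc (t-1) (t+1) ×ˢ uIcc c d) := isCompact_Icc.prod isCompact_uIcc
    obtain ⟨C, hC⟩ := hcomp.exists_bound_of_continuousOn (pd_cont hf).norm.continuousOn
    exact ⟨C, fun q hq => by simpa using hC q hq⟩
  have main := intervalIntegral.hasDerivAt_integral_of_dominated_loc_of_deriv_le
    (F := fun s x => f s x) (F' := fun s x => pd f s x) (x₀ := t) (a := c) (b := d)
    (bound := fun _ => C) (μ := volume) (Metric.ball_mem_nhds t one_pos)
    (Eventually.of_forall fun s => ((cont_slice hf.continuous s).aestronglyMeasurable))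
    ((cont_slice hf.continuous t).intervalIntegrable c d)
    (((pd_cont hf).comp (Continuous.prodMk_right t)).aestronglyMeasurable)
    (Eventually.of_forall fun x hx s hs => hC (s, x)
      ⟨⟨by have := abs_lt.1 (by simpa [Real.dist_eq] using Metric.mem_ball.1 hs); linarith [this.1],
        by have := abs_lt.1 (by simpa [Real.dist_eq] using Metric.mem_ball.1 hs); linarith [this.2]⟩,
        uIoc_subset_uIcc hx⟩)
    (intervalIntegrable_const)
    (Eventually.of_forall fun x _ s _ => pd_hasDerivAt hf s x)
  exact main.2


/-- Derivative of an integral over a moving interval shrinking to a point. -/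
lemma L2 {f : ℝ → ℝ → ℝ} (hf : ContDiff ℝ 1 (fun q : ℝ × ℝ => f q.1 q.2))
    {q : ℝ → ℝ} {q' t : ℝ} (hq : HasDerivAt q q' t) :
    HasDerivAt (fun s => ∫ x in (q t)..(q s), f s x) (q' * f t (q t)) t := by
  set P := q t with hP
  -- split into the frozen part and the remainder
  have hsplit : (fun s => ∫ x in P..(q s), f s x)
      = fun s => (∫ x in P..(q s), f t x) + ∫ x in P..(q s), (f s x - f t x) := by
    funext s
    rw [← intervalIntegral.integral_add (g := fun x => f s x - f t x) ((cont_slice hf.continuous t).intervalIntegrable _ _)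
      (((cont_slice hf.continuous s).sub (cont_slice hf.continuous t)).intervalIntegrable _ _)]
    congr 1; funext x; ring
  rw [hsplit]
  -- frozen part: chain rule through the primitive
  have hΦ : HasDerivAt (fun y => ∫ x in P..y, f t x) (f t P) P :=
    intervalIntegral.integral_hasDerivAt_right
      ((cont_slice hf.continuous t).intervalIntegrable _ _)
      ((cont_slice hf.continuous t).stronglyMeasurableAtFilter _ _)
      (cont_slice hf.continuous t).continuousAt
  have h1 : HasDerivAt (fun s => ∫ x in P..(q s), f t x) (f t P * q') t := hΦ.comp t hq
  -- remainder: has derivative 0 by a little-o estimate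
  have h2 : HasDerivAt (fun s => ∫ x in P..(q s), (f s x - f t x)) 0 t := by
    rw [hasDerivAt_iff_isLittleO]
    simp only [← hP, intervalIntegral.integral_same, sub_zero, smul_zero, sub_zero]
    rw [Asymptotics.isLittleO_iff]
    intro c hc
    -- bound for pd f on a compact neighborhood
    obtain ⟨C, hC, hC0⟩ : ∃ C, (∀ u ∈ Icc (t-1) (t+1), ∀ x ∈ Icc (P-1) (P+1),
        ‖pd f u x‖ ≤ C) ∧ 0 ≤ C := by
      have hcomp : IsCompact ((Icc (t-1) (t+1)) ×ˢ (Icc (P-1) (P+1))) :=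
        isCompact_Icc.prod isCompact_Icc
      obtain ⟨C, hC⟩ := hcomp.exists_bound_of_continuousOn (pd_cont hf).norm.continuousOn
      refine ⟨C, fun u hu x hx => by simpa using hC (u, x) ⟨hu, hx⟩, ?_⟩
      have h0 : ‖pd f t P‖ ≤ C := by
        simpa using hC (t, P) ⟨⟨by linarith, by linarith⟩, ⟨by linarith, by linarith⟩⟩
      exact le_trans (norm_nonneg _) h0
    -- Lipschitz-in-time estimate on the compact set
    have lip : ∀ s ∈ Icc (t-1) (t+1), ∀ x ∈ Icc (P-1) (P+1),
        ‖f s x - f t x‖ ≤ C * ‖s - t‖ := by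
      intro s hs x hx
      have := Convex.norm_image_sub_le_of_norm_hasDerivWithin_le
        (f := fun u => f u x) (f' := fun u => pd f u x) (C := C)
        (fun u hu => (pd_hasDerivAt hf u x).hasDerivWithinAt)
        (fun u hu => hC u hu x hx) (convex_Icc _ _)
        (⟨by linarith, by linarith⟩ : t ∈ Icc (t-1) (t+1)) hs
      simpa using this
    -- choose s close enough
    have hqc : ContinuousAt q t := hq.continuousAt
    have hev1 : ∀ᶠ s in 𝓝 t, |q s - P| ≤ min 1 (c / (C + 1)) := by
      have : Tendsto (fun s => |q s - P|) (𝓝 t) (𝓝 |q t - P|) :=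
        ((hqc.tendsto.sub tendsto_const_nhds).abs)
      simp only [← hP, sub_self, abs_zero] at this
      exact this.eventually_le_const (by positivity)
    have hev2 : ∀ᶠ s in 𝓝 t, s ∈ Icc (t-1) (t+1) :=
      Icc_mem_nhds (by linarith) (by linarith)
    filter_upwards [hev1, hev2] with s h1s h2s
    have hsub : uIoc P (q s) ⊆ Icc (P-1) (P+1) := by
      refine
        (uIoc_subset_uIcc).trans (uIcc_subset_Icc ⟨by linarith, by linarith⟩ ?_)
      have h := abs_le.1 (le_trans h1s (min_le_left _ _))
      exact ⟨by linarith [h.1], by linarith [h.2]⟩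
    have hbd : ∀ x ∈ uIoc P (q s), ‖f s x - f t x‖ ≤ C * ‖s - t‖ :=
      fun x hx => lip s h2s x (hsub hx)
    have := intervalIntegral.norm_integral_le_of_norm_le_const hbd
    refine le_trans this ?_
    have h3 : |q s - P| ≤ c / (C + 1) := le_trans h1s (min_le_right _ _)
    have h4 : (0:ℝ) ≤ ‖s - t‖ := norm_nonneg _
    calc C * ‖s - t‖ * |q s - P| ≤ C * ‖s - t‖ * (c / (C + 1)) := by
          apply mul_le_mul_of_nonneg_left h3 (by positivity)
      _ ≤ c * ‖s - t‖ := by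
          rw [div_eq_mul_inv]
          have hinv : C * (C + 1)⁻¹ ≤ 1 := by
            rw [mul_inv_le_iff₀ (by linarith)]; linarith
          calc C * ‖s - t‖ * (c * (C + 1)⁻¹) = (C * (C + 1)⁻¹) * c * ‖s - t‖ := by ring
            _ ≤ 1 * c * ‖s - t‖ := by
                apply mul_le_mul_of_nonneg_right _ h4
                exact mul_le_mul_of_nonneg_right hinv hc.le
            _ = c * ‖s - t‖ := by ring
  have := h1.add h2
  rw [add_zero, mul_comm] at this; exact this

end RH1D

open RH1D

/-- **Generalized Rankine–Hugoniot jump condition in one space dimension:**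
if the integral balance law holds on every interval containing the moving singular
point `x = p(t)`, then `ψ_p'(t) − ξ_p(t) = p'(t)⟦ψ⟧ − ⟦ψv + j⟧`. -/
theorem generalized_rankine_hugoniot_1d
    (T : ℝ) (hT : 0 < T)
    (p : ℝ → ℝ) (hp : ContDiff ℝ 1 p)
    (ψ1 ψ2 v1 v2 j1 j2 : ℝ → ℝ → ℝ)
    (hψ1 : ContDiff ℝ 1 (fun q : ℝ × ℝ => ψ1 q.1 q.2))
    (hψ2 : ContDiff ℝ 1 (fun q : ℝ × ℝ => ψ2 q.1 q.2))
    (hv1 : ContDiff ℝ 1 (fun q : ℝ × ℝ => v1 q.1 q.2))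
    (hv2 : ContDiff ℝ 1 (fun q : ℝ × ℝ => v2 q.1 q.2))
    (hj1 : ContDiff ℝ 1 (fun q : ℝ × ℝ => j1 q.1 q.2))
    (hj2 : ContDiff ℝ 1 (fun q : ℝ × ℝ => j2 q.1 q.2))
    -- the piecewise bulk fields
    (ψ v j : ℝ → ℝ → ℝ)
    (hψ : ∀ t x, ψ t x = if x < p t then ψ1 t x else ψ2 t x)
    (hv : ∀ t x, v t x = if x < p t then v1 t x else v2 t x)
    (hj : ∀ t x, j t x = if x < p t then j1 t x else j2 t x)
    (ξ : ℝ → ℝ → ℝ) (hξ : Continuous (fun q : ℝ × ℝ => ξ q.1 q.2))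
    (ψp ξp : ℝ → ℝ) (hψp : ContDiff ℝ 1 ψp)
    -- the integral balance law
    (hbalance : ∀ a b : ℝ, ∀ t ∈ Set.Icc 0 T, a < p t → p t < b →
      HasDerivAt (fun s => (∫ x in a..b, ψ s x) + ψp s)
        ((ψ t a * v t a + j t a) - (ψ t b * v t b + j t b) +
          (∫ x in a..b, ξ t x) + ξp t) t) :
    ∀ t ∈ Set.Ioo 0 T,
      deriv ψp t - ξp t =
        deriv p t * (ψ2 t (p t) - ψ1 t (p t)) -
          ((ψ2 t (p t) * v2 t (p t) + j2 t (p t)) -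
            (ψ1 t (p t) * v1 t (p t) + j1 t (p t))) := by

  intro t ht
  have hp' : HasDerivAt p (deriv p t) t :=
    ((hp.differentiable one_ne_zero) t).hasDerivAt
  have hψp' : HasDerivAt ψp (deriv ψp t) t :=
    ((hψp.differentiable one_ne_zero) t).hasDerivAt
  -- the key identity for every interval (a, b) around p t
  have key : ∀ a b : ℝ, a < p t → p t < b →
      ((∫ x in a..(p t), pd ψ1 t x) + (∫ x in (p t)..b, pd ψ2 t x)
          + deriv p t * ψ1 t (p t) - deriv p t * ψ2 t (p t)) + deriv ψp t
        = (ψ1 t a * v1 t a + j1 t a) - (ψ2 t b * v2 t b + j2 t b)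
          + ((∫ x in a..(p t), ξ t x) + (∫ x in (p t)..b, ξ t x)) + ξp t := by
    intro a b ha hb
    have hbal := hbalance a b t ⟨ht.1.le, ht.2.le⟩ ha hb
    have hA1 := L1 hψ1 a (p t) t
    have hA2 := L1 hψ2 (p t) b t
    have hK1 := L2 hψ1 hp'
    have hK2 := L2 hψ2 hp'
    have hF0 := ((hA1.add hA2).add hK1).sub hK2
    -- eventual equality of the two expressions for the total mass
    have hev : (fun s => ∫ x in a..b, ψ s x) =ᶠ[nhds t]
        (fun s => (((∫ x in a..(p t), ψ1 s x) + ∫ x in (p t)..b, ψ2 s x)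
          + ∫ x in (p t)..(p s), ψ1 s x) - ∫ x in (p t)..(p s), ψ2 s x) := by
      have hmem : p ⁻¹' (Set.Ioo a b) ∈ nhds t :=
        hp.continuous.continuousAt.preimage_mem_nhds (Ioo_mem_nhds ha hb)
      filter_upwards [hmem] with s hs
      have hps1 : a < p s := hs.1
      have hps2 : p s < b := hs.2
      have m0 : ∀ᵐ (x : ℝ), x ≠ p s := by
        have hset : {x : ℝ | ¬ x ≠ p s} = {p s} := by ext x; simp
        rw [ae_iff, hset]; exact measure_singleton _
      -- integrability of ψ s on the two half intervals
      have int1 : IntervalIntegrable (ψ s) volume a (p s) := by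
        rw [intervalIntegrable_iff, uIoc_of_le hps1.le]
        apply ((cont_slice hψ1.continuous s).integrableOn_Ioc).congr
        rw [EventuallyEq, ae_restrict_iff' measurableSet_Ioc]
        filter_upwards [m0] with x hx hmem'
        rw [hψ, if_pos (lt_of_le_of_ne hmem'.2 hx)]
      have int2 : IntervalIntegrable (ψ s) volume (p s) b := by
        rw [intervalIntegrable_iff, uIoc_of_le hps2.le]
        apply ((cont_slice hψ2.continuous s).integrableOn_Ioc).congr
        rw [EventuallyEq, ae_restrict_iff' measurableSet_Ioc]
        filter_upwards with x hmem'
        rw [hψ, if_neg (not_lt.2 hmem'.1.le)]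
      have esplit : ∫ x in a..b, ψ s x
          = (∫ x in a..(p s), ψ s x) + ∫ x in (p s)..b, ψ s x :=
        (intervalIntegral.integral_add_adjacent_intervals int1 int2).symm
      have e1 : ∫ x in a..(p s), ψ s x = ∫ x in a..(p s), ψ1 s x := by
        apply intervalIntegral.integral_congr_ae
        filter_upwards [m0] with x hx hmem'
        rw [uIoc_of_le hps1.le] at hmem'
        rw [hψ, if_pos (lt_of_le_of_ne hmem'.2 hx)]
      have e2 : ∫ x in (p s)..b, ψ s x = ∫ x in (p s)..b, ψ2 s x := by
        apply intervalIntegral.integral_congr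
        intro x hx
        rw [Set.uIcc_of_le hps2.le] at hx
        rw [hψ, if_neg (not_lt.2 hx.1)]
      have e3 : ∫ x in a..(p s), ψ1 s x
          = (∫ x in a..(p t), ψ1 s x) + ∫ x in (p t)..(p s), ψ1 s x :=
        (intervalIntegral.integral_add_adjacent_intervals
          ((cont_slice hψ1.continuous s).intervalIntegrable _ _)
          ((cont_slice hψ1.continuous s).intervalIntegrable _ _)).symm
      have e4 : ∫ x in (p s)..b, ψ2 s x
          = (∫ x in (p s)..(p t), ψ2 s x) + ∫ x in (p t)..b, ψ2 s x :=
        (intervalIntegral.integral_add_adjacent_intervals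
          ((cont_slice hψ2.continuous s).intervalIntegrable _ _)
          ((cont_slice hψ2.continuous s).intervalIntegrable _ _)).symm
      have e5 : ∫ x in (p s)..(p t), ψ2 s x = -∫ x in (p t)..(p s), ψ2 s x :=
        intervalIntegral.integral_symm _ _
      rw [esplit, e1, e2, e3, e4, e5]; ring
    have hFψ : HasDerivAt (fun s => ∫ x in a..b, ψ s x)
        ((((∫ x in a..(p t), pd ψ1 t x) + ∫ x in (p t)..b, pd ψ2 t x)
          + deriv p t * ψ1 t (p t)) - deriv p t * ψ2 t (p t)) t :=
      hF0.congr_of_eventuallyEq hev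
    have huniq := (hFψ.add hψp').unique hbal
    have hξsplit : ∫ x in a..b, ξ t x
        = (∫ x in a..(p t), ξ t x) + ∫ x in (p t)..b, ξ t x :=
      (intervalIntegral.integral_add_adjacent_intervals
        ((cont_slice hξ t).intervalIntegrable _ _)
        ((cont_slice hξ t).intervalIntegrable _ _)).symm
    rw [hψ, hv, hj, hψ, hv, hj, if_pos ha, if_pos ha, if_pos ha,
      if_neg (not_lt.2 hb.le), if_neg (not_lt.2 hb.le), if_neg (not_lt.2 hb.le),
      hξsplit] at huniq
    linarith [huniq]
  -- take limits a ↑ p t, b ↓ p t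
  set u : ℕ → ℝ := fun n => 1 / ((n : ℝ) + 1) with hu_def
  have hu : Filter.Tendsto u Filter.atTop (nhds 0) :=
    tendsto_one_div_add_atTop_nhds_zero_nat
  have hupos : ∀ n, 0 < u n := fun n => by positivity
  have haP : Filter.Tendsto (fun n => p t - u n) Filter.atTop (nhds (p t)) := by
    simpa using tendsto_const_nhds.sub hu
  have hbP : Filter.Tendsto (fun n => p t + u n) Filter.atTop (nhds (p t)) := by
    simpa using tendsto_const_nhds.add hu
  have eqn : ∀ n : ℕ,
      ((∫ x in (p t - u n)..(p t), pd ψ1 t x) + (∫ x in (p t)..(p t + u n), pd ψ2 t x)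
          + deriv p t * ψ1 t (p t) - deriv p t * ψ2 t (p t)) + deriv ψp t
        = (ψ1 t (p t - u n) * v1 t (p t - u n) + j1 t (p t - u n))
          - (ψ2 t (p t + u n) * v2 t (p t + u n) + j2 t (p t + u n))
          + ((∫ x in (p t - u n)..(p t), ξ t x) + (∫ x in (p t)..(p t + u n), ξ t x)) + ξp t :=
    fun n => key _ _ (by linarith [hupos n]) (by linarith [hupos n])
  -- limits of each piece
  have prim1 : Continuous fun y => ∫ x in (p t)..y, pd ψ1 t x :=
    intervalIntegral.continuous_primitive
      (fun _ _ => ((pd_cont hψ1).comp (Continuous.prodMk_right t)).intervalIntegrable _ _) _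
  have prim2 : Continuous fun y => ∫ x in (p t)..y, pd ψ2 t x :=
    intervalIntegral.continuous_primitive
      (fun _ _ => ((pd_cont hψ2).comp (Continuous.prodMk_right t)).intervalIntegrable _ _) _
  have primξ : Continuous fun y => ∫ x in (p t)..y, ξ t x :=
    intervalIntegral.continuous_primitive
      (fun _ _ => (cont_slice hξ t).intervalIntegrable _ _) _
  have t1 : Filter.Tendsto (fun n => ∫ x in (p t - u n)..(p t), pd ψ1 t x)
      Filter.atTop (nhds 0) := by
    have heq : (fun n => ∫ x in (p t - u n)..(p t), pd ψ1 t x)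
        = fun n => -∫ x in (p t)..(p t - u n), pd ψ1 t x :=
      funext fun n => intervalIntegral.integral_symm _ _
    rw [heq]
    have := ((prim1.tendsto (p t)).comp haP).neg
    simpa using this
  have t2 : Filter.Tendsto (fun n => ∫ x in (p t)..(p t + u n), pd ψ2 t x)
      Filter.atTop (nhds 0) := by
    have := (prim2.tendsto (p t)).comp hbP
    simpa [Function.comp_def] using this
  have t5 : Filter.Tendsto (fun n => ∫ x in (p t - u n)..(p t), ξ t x)
      Filter.atTop (nhds 0) := by
    have heq : (fun n => ∫ x in (p t - u n)..(p t), ξ t x)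
        = fun n => -∫ x in (p t)..(p t - u n), ξ t x :=
      funext fun n => intervalIntegral.integral_symm _ _
    rw [heq]
    have := ((primξ.tendsto (p t)).comp haP).neg
    simpa using this
  have t6 : Filter.Tendsto (fun n => ∫ x in (p t)..(p t + u n), ξ t x)
      Filter.atTop (nhds 0) := by
    have := (primξ.tendsto (p t)).comp hbP
    simpa [Function.comp_def] using this
  have cflux1 : Continuous fun x => ψ1 t x * v1 t x + j1 t x :=
    ((cont_slice hψ1.continuous t).mul (cont_slice hv1.continuous t)).add
      (cont_slice hj1.continuous t)
  have cflux2 : Continuous fun x => ψ2 t x * v2 t x + j2 t x :=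
    ((cont_slice hψ2.continuous t).mul (cont_slice hv2.continuous t)).add
      (cont_slice hj2.continuous t)
  have t3 : Filter.Tendsto
      (fun n => ψ1 t (p t - u n) * v1 t (p t - u n) + j1 t (p t - u n))
      Filter.atTop (nhds (ψ1 t (p t) * v1 t (p t) + j1 t (p t))) :=
    (cflux1.tendsto (p t)).comp haP
  have t4 : Filter.Tendsto
      (fun n => ψ2 t (p t + u n) * v2 t (p t + u n) + j2 t (p t + u n))
      Filter.atTop (nhds (ψ2 t (p t) * v2 t (p t) + j2 t (p t))) :=
    (cflux2.tendsto (p t)).comp hbP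
  have TL : Filter.Tendsto (fun n =>
      ((∫ x in (p t - u n)..(p t), pd ψ1 t x) + (∫ x in (p t)..(p t + u n), pd ψ2 t x)
          + deriv p t * ψ1 t (p t) - deriv p t * ψ2 t (p t)) + deriv ψp t)
      Filter.atTop (nhds (((0 : ℝ) + 0 + deriv p t * ψ1 t (p t)
        - deriv p t * ψ2 t (p t)) + deriv ψp t)) :=
    ((((t1.add t2).add tendsto_const_nhds).sub tendsto_const_nhds).add tendsto_const_nhds)
  have TR : Filter.Tendsto (fun n =>
      (ψ1 t (p t - u n) * v1 t (p t - u n) + j1 t (p t - u n))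
        - (ψ2 t (p t + u n) * v2 t (p t + u n) + j2 t (p t + u n))
        + ((∫ x in (p t - u n)..(p t), ξ t x) + (∫ x in (p t)..(p t + u n), ξ t x)) + ξp t)
      Filter.atTop (nhds ((ψ1 t (p t) * v1 t (p t) + j1 t (p t))
        - (ψ2 t (p t) * v2 t (p t) + j2 t (p t)) + ((0 : ℝ) + 0) + ξp t)) :=
    (((t3.sub t4).add (t5.add t6)).add tendsto_const_nhds)
  have heq := tendsto_nhds_unique TL (TR.congr (fun n => (eqn n).symm))
  linarith [heq]
end
end
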